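/- arXiv:1411.3287 — 6 statements merged into one kernel-verified Lean document; each statement's English description precedes it below -/
import Mathlib

section
/- Suppose 1 ≤ m < ∞ is a real number, 0 ≤ s < r < ∞, 0 ≤ κ < ∞, I = {t : s < t ≤ r}, and f : I → {y : 0 < y < ∞} is a Lebesgue measurable function satisfying, for every t ∈ I, both limsup_{u → t-} f(u) ≤ f(t) and f(t) ≤ f(r) + κ · f(r)^{1/m} · ∫_t^r u^{-1} f(u)^{1-1/m} du (Lebesgue integral). Then f(t) ≤ (1 + m^{-1} κ log(r/t))^m · f(r) for every t ∈ I. -/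
open MeasureTheory Filter Set

/-- Calculus lemma: if `f : (s, r] → (0, ∞)` is Lebesgue measurable, left upper
semicontinuous, and satisfies the integral growth inequality
`f t ≤ f r + κ f(r)^(1/m) ∫_t^r u⁻¹ f(u)^(1-1/m) du`, then
`f t ≤ (1 + m⁻¹ κ log (r/t))^m f r` on `(s, r]`. -/
theorem stmt_0 (m s r κ : ℝ) (hm : 1 ≤ m) (hs : 0 ≤ s) (hsr : s < r)
    (hκ : 0 ≤ κ) (f : ℝ → ℝ)
    (hf_meas : AEMeasurable f (volume.restrict (Set.Ioc s r)))
    (hf_pos : ∀ t ∈ Set.Ioc s r, 0 < f t)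
    (hf_limsup : ∀ t ∈ Set.Ioc s r, Filter.limsup f (nhdsWithin t (Set.Ioo s t)) ≤ f t)
    (hf_int : ∀ t ∈ Set.Ioc s r,
      f t ≤ f r + κ * f r ^ (1 / m) * ∫ u in Set.Ioc t r, u⁻¹ * f u ^ (1 - 1 / m)) :
    ∀ t ∈ Set.Ioc s r, f t ≤ (1 + m⁻¹ * κ * Real.log (r / t)) ^ m * f r := by
  intro t ht
  obtain ⟨hst, htr⟩ := ht
  have ht0 : 0 < t := lt_of_le_of_lt hs hst
  have hr0 : 0 < r := lt_of_lt_of_le ht0 htr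
  have hm0 : 0 < m := lt_of_lt_of_le one_pos hm
  have hA : 0 < f r := hf_pos r ⟨hsr, le_refl r⟩
  have hexp : 0 ≤ 1 - 1 / m := by
    have h1 : 1 / m ≤ 1 := by rw [div_le_one hm0]; exact hm
    linarith
  have hL0 : 0 ≤ Real.log (r / t) :=
    Real.log_nonneg (by rw [le_div_iff₀ ht0]; linarith)
  have hLfac : 0 ≤ m⁻¹ * κ * Real.log (r / t) := by positivity
  have hone : (1 : ℝ) ≤ (1 + m⁻¹ * κ * Real.log (r / t)) ^ m :=
    Real.one_le_rpow (by linarith) hm0.le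
  -- trivial route: `f t ≤ f r` suffices
  have htriv : f t ≤ f r → f t ≤ (1 + m⁻¹ * κ * Real.log (r / t)) ^ m * f r := by
    intro h
    nlinarith
  by_cases hκ0 : κ = 0
  · subst hκ0
    have := hf_int t ⟨hst, htr⟩
    simp only [zero_mul, mul_zero, add_zero] at this
    exact htriv this
  have hκpos : 0 < κ := lt_of_le_of_ne hκ (Ne.symm hκ0)
  by_cases hInt : IntegrableOn (fun u => u⁻¹ * f u ^ (1 - 1 / m)) (Set.Ioc t r) volume
  swap
  · have h1 := hf_int t ⟨hst, htr⟩
    rw [MeasureTheory.integral_undef hInt, mul_zero, add_zero] at h1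
    exact htriv h1
  -- main case
  set A := f r with hAdef
  set B := κ * A ^ (1 / m) with hBdef
  have hBpos : 0 < B := by positivity
  set c := m⁻¹ * κ * A ^ (1 / m) with hcdef
  have hcpos : 0 < c := by positivity
  have hmc : m * c = B := by
    rw [hcdef, hBdef]
    field_simp
  set g : ℝ → ℝ := fun u => u⁻¹ * f u ^ (1 - 1 / m) with hgdef
  set h : ℝ → ℝ := fun x => A + B * ∫ u in Set.Ioc x r, g u with hhdef
  have hfh : ∀ u ∈ Set.Ioc s r, f u ≤ h u := fun u hu => hf_int u hu
  -- continuity of h on Icc t r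
  have hIntIcc : IntegrableOn g (Set.Icc t r) := by
    rwa [integrableOn_Icc_iff_integrableOn_Ioc]
  have hcont_h : ContinuousOn h (Set.Icc t r) := by
    have hprim : ContinuousOn (fun x => ∫ u in x..r, g u) (Set.Icc t r) := by
      have h1 := intervalIntegral.continuousOn_primitive_interval_left
        (a := t) (b := r) (f := g) (μ := volume)
        (by rwa [Set.uIcc_of_le htr])
      rwa [Set.uIcc_of_le htr] at h1
    have heq : Set.EqOn h (fun x => A + B * ∫ u in x..r, g u) (Set.Icc t r) := by
      intro x hx
      simp only [hhdef]
      rw [intervalIntegral.integral_of_le hx.2]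
    exact (continuousOn_const.add (continuousOn_const.mul hprim)).congr heq
  -- the key estimate with an epsilon of room
  suffices hkey : ∀ ε > (0:ℝ), f t ≤ ((A + ε) ^ (1/m) + c * (Real.log r - Real.log t)) ^ m by
    have hlim : Filter.Tendsto
        (fun ε : ℝ => ((A + ε) ^ (1/m) + c * (Real.log r - Real.log t)) ^ m)
        (nhdsWithin 0 (Set.Ioi 0))
        (nhds ((A ^ (1/m) + c * (Real.log r - Real.log t)) ^ m)) := by
      have hbpos : 0 < A ^ (1/m) + c * (Real.log r - Real.log t) := by
        have : 0 ≤ c * (Real.log r - Real.log t) := by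
          have : Real.log t ≤ Real.log r := Real.log_le_log ht0 htr
          nlinarith
        have := Real.rpow_pos_of_pos hA (1/m)
        linarith
      have hca : ContinuousAt
          (fun ε : ℝ => ((A + ε) ^ (1/m) + c * (Real.log r - Real.log t)) ^ m) 0 := by
        have h1 : ContinuousAt (fun ε : ℝ => A + ε) 0 := by fun_prop
        have h2 : ContinuousAt (fun ε : ℝ => (A + ε) ^ (1/m)) 0 :=
          h1.rpow_const (Or.inl (by simpa using hA.ne'))
        have h3 : ContinuousAt
            (fun ε : ℝ => (A + ε) ^ (1/m) + c * (Real.log r - Real.log t)) 0 :=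
          h2.add continuousAt_const
        exact h3.rpow_const (Or.inl (by simpa using hbpos.ne'))
      have := hca.tendsto
      simp only [add_zero] at this
      exact this.mono_left nhdsWithin_le_nhds
    have hle : f t ≤ (A ^ (1/m) + c * (Real.log r - Real.log t)) ^ m := by
      refine ge_of_tendsto hlim ?_
      filter_upwards [self_mem_nhdsWithin] with ε hε
      exact hkey ε hε
    have heqf : (A ^ (1/m) + c * (Real.log r - Real.log t)) ^ m
        = (1 + m⁻¹ * κ * Real.log (r / t)) ^ m * A := by
      have hlog : Real.log (r / t) = Real.log r - Real.log t :=
        Real.log_div hr0.ne' ht0.ne'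
      rw [hlog]
      have hfac : A ^ (1/m) + c * (Real.log r - Real.log t)
          = A ^ (1/m) * (1 + m⁻¹ * κ * (Real.log r - Real.log t)) := by
        rw [hcdef]; ring
      rw [hfac, Real.mul_rpow (Real.rpow_pos_of_pos hA _).le (by rw [← hlog]; linarith)]
      rw [← Real.rpow_mul hA.le, one_div, inv_mul_cancel₀ hm0.ne', Real.rpow_one]
      ring
    rw [heqf] at hle
    exact hle
  -- proof of the key estimate
  intro ε hε
  have hAε : 0 < A + ε := by linarith
  set a := (A + ε) ^ (1/m) with hadef
  have ha : 0 < a := Real.rpow_pos_of_pos hAε _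
  set G : ℝ → ℝ := fun x => (a + c * (Real.log r - Real.log x)) ^ m with hGdef
  have hbase : ∀ x ∈ Set.Icc t r, 0 < a + c * (Real.log r - Real.log x) := by
    intro x hx
    have hx0 : 0 < x := lt_of_lt_of_le ht0 hx.1
    have : Real.log x ≤ Real.log r := Real.log_le_log hx0 hx.2
    nlinarith
  have hGpos : ∀ x ∈ Set.Icc t r, 0 < G x := fun x hx =>
    Real.rpow_pos_of_pos (hbase x hx) _
  have hGr : G r = A + ε := by
    simp only [hGdef, sub_self, mul_zero, add_zero, hadef]
    rw [← Real.rpow_mul hAε.le, one_div, inv_mul_cancel₀ hm0.ne', Real.rpow_one]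
  -- continuity facts about G
  have hcontG : ∀ x, t ≤ x → ContinuousOn G (Set.Icc x r) := by
    intro x hx
    have hsub : Set.Icc x r ⊆ Set.Icc t r := Set.Icc_subset_Icc_left hx
    have hlog : ContinuousOn Real.log (Set.Icc x r) :=
      Real.continuousOn_log.mono (fun u hu => by
        simp only [Set.mem_compl_iff, Set.mem_singleton_iff]
        exact (lt_of_lt_of_le ht0 (hsub hu).1).ne')
    have hbc : ContinuousOn (fun u => a + c * (Real.log r - Real.log u)) (Set.Icc x r) :=
      continuousOn_const.add (continuousOn_const.mul (continuousOn_const.sub hlog))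
    exact fun u hu => by
      exact (hbc.rpow_const (fun v hv => Or.inl (hbase v (hsub hv)).ne')) u hu
  have hcontGI : ∀ x, t ≤ x → ContinuousOn (fun u => u⁻¹ * G u ^ (1 - 1/m)) (Set.Icc x r) := by
    intro x hx
    have hsub : Set.Icc x r ⊆ Set.Icc t r := Set.Icc_subset_Icc_left hx
    have hinv : ContinuousOn (fun u : ℝ => u⁻¹) (Set.Icc x r) :=
      continuousOn_id.inv₀ (fun u hu => (lt_of_lt_of_le ht0 (hsub hu).1).ne')
    exact hinv.mul ((hcontG x hx).rpow_const (fun v hv => Or.inr hexp))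
  -- fundamental theorem of calculus identity for G
  have hFTC : ∀ x ∈ Set.Icc t r,
      ∫ u in Set.Ioc x r, B * (u⁻¹ * G u ^ (1 - 1/m)) = G x - (A + ε) := by
    intro x hx
    have hxr : x ≤ r := hx.2
    have hx0 : 0 < x := lt_of_lt_of_le ht0 hx.1
    have hderiv : ∀ u ∈ Set.Icc x r,
        HasDerivAt (fun v => -G v) (B * (u⁻¹ * G u ^ (1 - 1/m))) u := by
      intro u hu
      have hu0 : 0 < u := lt_of_lt_of_le hx0 hu.1
      have huI : u ∈ Set.Icc t r := ⟨le_trans hx.1 hu.1, hu.2⟩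
      have hub : 0 < a + c * (Real.log r - Real.log u) := hbase u huI
      have h1 : HasDerivAt (fun v : ℝ => a + c * (Real.log r - Real.log v))
          (c * (0 - u⁻¹)) u :=
        (((hasDerivAt_const u (Real.log r)).sub (Real.hasDerivAt_log hu0.ne')).const_mul c).const_add a
      have h2 := (h1.rpow_const (p := m) (Or.inl hub.ne')).neg
      have hGu : G u ^ (1 - 1/m) = (a + c * (Real.log r - Real.log u)) ^ (m - 1) := by
        simp only [hGdef]
        rw [← Real.rpow_mul hub.le]
        congr 1
        field_simp
      have heq : B * (u⁻¹ * G u ^ (1 - 1/m))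
          = -(c * (0 - u⁻¹) * m * (a + c * (Real.log r - Real.log u)) ^ (m - 1)) := by
        rw [hGu, ← hmc]
        ring
      rw [heq]
      exact h2
    have hii : IntervalIntegrable (fun u => B * (u⁻¹ * G u ^ (1 - 1/m))) volume x r := by
      apply ContinuousOn.intervalIntegrable
      rw [Set.uIcc_of_le hxr]
      exact continuousOn_const.mul (hcontGI x hx.1)
    have hkey := intervalIntegral.integral_eq_sub_of_hasDerivAt
      (f := fun v => -G v) (f' := fun u => B * (u⁻¹ * G u ^ (1 - 1/m)))
      (fun u hu => hderiv u (by rwa [Set.uIcc_of_le hxr] at hu)) hii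
    rw [intervalIntegral.integral_of_le hxr] at hkey
    rw [hkey]
    show -G r - -G x = G x - (A + ε)
    rw [hGr]
    ring
  -- the comparison set
  set K := {x ∈ Set.Icc t r | G x ≤ h x} with hKdef
  have hKempty : K = ∅ := by
    by_contra hne
    obtain ⟨x₀, hx₀⟩ := Set.nonempty_iff_ne_empty.mpr hne
    have hclosed : IsClosed K := by
      have hcs : ContinuousOn (fun x => h x - G x) (Set.Icc t r) :=
        hcont_h.sub (hcontG t le_rfl)
      have : K = Set.Icc t r ∩ (fun x => h x - G x) ⁻¹' Set.Ici 0 := by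
        ext x
        simp only [hKdef, Set.mem_sep_iff, Set.mem_inter_iff, Set.mem_preimage,
          Set.mem_Ici, sub_nonneg]
      rw [this]
      exact hcs.preimage_isClosed_of_isClosed isClosed_Icc isClosed_Ici
    have hKcomp : IsCompact K :=
      isCompact_Icc.of_isClosed_subset hclosed (Set.sep_subset _ _)
    have hx₁mem := hKcomp.sSup_mem ⟨x₀, hx₀⟩
    set x₁ := sSup K with hx₁def
    obtain ⟨⟨hx₁t, hx₁r⟩, hx₁G⟩ := hx₁mem
    have hrK : r ∉ K := by
      intro hrmem
      have h1 := hrmem.2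
      have h2 : h r = A := by simp [hhdef, Set.Ioc_self]
      rw [h2, hGr] at h1
      linarith
    have hx₁lt : x₁ < r := lt_of_le_of_ne hx₁r (fun hh => hrK (hh ▸ ⟨⟨hx₁t, hx₁r⟩, hx₁G⟩))
    -- pointwise comparison on Ioc x₁ r
    have hpt : ∀ u ∈ Set.Ioc x₁ r, g u ≤ u⁻¹ * G u ^ (1 - 1/m) := by
      intro u hu
      have hu0 : 0 < u := lt_of_le_of_lt (le_trans ht0.le hx₁t) hu.1
      have huI : u ∈ Set.Ioc s r := ⟨lt_of_lt_of_le hst (le_trans hx₁t hu.1.le), hu.2⟩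
      have hfu : f u ≤ h u := hfh u huI
      have hunotK : u ∉ K := fun hmem =>
        absurd (le_csSup hKcomp.bddAbove hmem) (not_le.mpr hu.1)
      have hhu : h u < G u := by
        by_contra hle
        push_neg at hle
        exact hunotK ⟨⟨le_trans hx₁t hu.1.le, hu.2⟩, hle⟩
      have hfG : f u ≤ G u := le_of_lt (lt_of_le_of_lt hfu hhu)
      simp only [hgdef]
      exact mul_le_mul_of_nonneg_left
        (Real.rpow_le_rpow (hf_pos u huI).le hfG hexp) (inv_nonneg.mpr hu0.le)
    have hint1 : IntegrableOn g (Set.Ioc x₁ r) :=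
      hInt.mono_set (Set.Ioc_subset_Ioc_left hx₁t)
    have hint2 : IntegrableOn (fun u => u⁻¹ * G u ^ (1 - 1/m)) (Set.Ioc x₁ r) :=
      ((hcontGI x₁ hx₁t).integrableOn_Icc).mono_set Set.Ioc_subset_Icc_self
    have hmono : ∫ u in Set.Ioc x₁ r, g u ≤ ∫ u in Set.Ioc x₁ r, u⁻¹ * G u ^ (1 - 1/m) :=
      setIntegral_mono_on hint1 hint2 measurableSet_Ioc hpt
    have hFTC1 := hFTC x₁ ⟨hx₁t, hx₁r⟩
    rw [MeasureTheory.integral_const_mul] at hFTC1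
    have hhx₁ : h x₁ ≤ G x₁ - ε := by
      have h3 : B * ∫ u in Set.Ioc x₁ r, g u
          ≤ B * ∫ u in Set.Ioc x₁ r, u⁻¹ * G u ^ (1 - 1/m) :=
        mul_le_mul_of_nonneg_left hmono hBpos.le
      simp only [hhdef]
      linarith
    linarith
  have htK : t ∉ K := by rw [hKempty]; exact Set.notMem_empty t
  have hlt : h t < G t := by
    by_contra hle
    push_neg at hle
    exact htK ⟨⟨le_refl t, htr⟩, hle⟩
  exact le_of_lt (lt_of_le_of_lt (hfh t ⟨hst, htr⟩) hlt)
end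

section
/- Suppose m and n are positive integers with m < n, and let Y denote the vector space of all symmetric endomorphisms of Euclidean ℝⁿ, i.e. Y = { σ : ℝⁿ → ℝⁿ linear with σ = σ* }. Then Y is spanned (as a real vector space) by the set of orthogonal projections proj_P of ℝⁿ onto P, where P ranges over all m-dimensional linear subspaces of ℝⁿ; that is, the linear span of { proj_P : P an m-dimensional linear subspace of ℝⁿ } equals Y. -/
open Module

/-- The orthogonal projection of `ℝⁿ` onto a subspace `P`, as an endomorphism of `ℝⁿ`. -/
noncomputable def projEndo {n : ℕ} (P : Submodule ℝ (EuclideanSpace ℝ (Fin n))) :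
    EuclideanSpace ℝ (Fin n) →ₗ[ℝ] EuclideanSpace ℝ (Fin n) :=
  P.subtype ∘ₗ (P.orthogonalProjection).toLinearMap

/-- rank one operator `x ↦ ⟪v, x⟫ • v`. -/
noncomputable def rkOne {n : ℕ} (v : EuclideanSpace ℝ (Fin n)) :
    EuclideanSpace ℝ (Fin n) →ₗ[ℝ] EuclideanSpace ℝ (Fin n) :=
  LinearMap.smulRight (innerSL ℝ v).toLinearMap v

lemma rkOne_apply {n : ℕ} (v x : EuclideanSpace ℝ (Fin n)) :
    rkOne v x = (inner ℝ v x : ℝ) • v := rfl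

lemma projEndo_isSymmetric {n : ℕ} (P : Submodule ℝ (EuclideanSpace ℝ (Fin n))) :
    (projEndo P).IsSymmetric :=
  P.starProjection_isSymmetric

lemma projEndo_span_orthonormal {n : ℕ} (b : OrthonormalBasis (Fin n) ℝ (EuclideanSpace ℝ (Fin n)))
    (s : Finset (Fin n)) :
    projEndo (Submodule.span ℝ (b '' ↑s)) = ∑ k ∈ s, rkOne (b k) := by
  ext x
  have hb := b.orthonormal
  have key : ((Submodule.span ℝ (b '' ↑s)).orthogonalProjection x :
      EuclideanSpace ℝ (Fin n)) = ∑ k ∈ s, (inner ℝ (b k) x : ℝ) • b k := by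
    show Submodule.starProjection _ x = _
    apply Submodule.eq_starProjection_of_mem_of_inner_eq_zero
    · exact Submodule.sum_mem _ fun k hk =>
        Submodule.smul_mem _ _ (Submodule.subset_span ⟨k, by simpa using hk, rfl⟩)
    · intro w hw
      induction hw using Submodule.span_induction with
      | mem w hw =>
        obtain ⟨k, hk, rfl⟩ := hw
        have hb' : ∀ p q : Fin n, (inner ℝ (b p) (b q) : ℝ) = if p = q then 1 else 0 :=
          orthonormal_iff_ite.mp hb
        rw [inner_sub_left, sub_eq_zero, sum_inner]
        rw [Finset.sum_eq_single k]
        · rw [real_inner_smul_left, hb' k k, if_pos rfl, mul_one, real_inner_comm]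
        · intro j _ hjk
          rw [real_inner_smul_left, hb' j k, if_neg hjk, mul_zero]
        · intro h; exact absurd (by simpa using hk) h
      | zero => simp
      | add w₁ w₂ _ _ h1 h2 => rw [inner_add_right, h1, h2, add_zero]
      | smul c w _ h => rw [inner_smul_right, h, mul_zero]
  simp only [projEndo, LinearMap.comp_apply, ContinuousLinearMap.coe_coe, Submodule.subtype_apply]
  rw [key]
  simp [rkOne_apply, LinearMap.sum_apply]

lemma finrank_span_orthonormal {n : ℕ}
    (b : OrthonormalBasis (Fin n) ℝ (EuclideanSpace ℝ (Fin n))) (s : Finset (Fin n)) :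
    finrank ℝ (Submodule.span ℝ (b '' ↑s)) = s.card := by
  have hli : LinearIndependent ℝ (fun k : ↥(s : Set (Fin n)) => b ↑k) :=
    b.orthonormal.linearIndependent.comp _ Subtype.val_injective
  have h1 : Set.range (fun k : ↥(s : Set (Fin n)) => b ↑k) = b '' ↑s := by
    rw [← Set.image_eq_range]
  rw [← h1, finrank_span_eq_card hli]
  simp

/-- For `1 ≤ m < n`, the symmetric endomorphisms of `ℝⁿ` are spanned by the orthogonal
projections onto `m`-dimensional subspaces. -/
theorem stmt_3 (m n : ℕ) (hm : 0 < m) (hmn : m < n) :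
    (Submodule.span ℝ {σ : EuclideanSpace ℝ (Fin n) →ₗ[ℝ] EuclideanSpace ℝ (Fin n) |
        ∃ P : Submodule ℝ (EuclideanSpace ℝ (Fin n)), finrank ℝ P = m ∧ σ = projEndo P} :
      Set (EuclideanSpace ℝ (Fin n) →ₗ[ℝ] EuclideanSpace ℝ (Fin n))) =
    {σ | LinearMap.IsSymmetric σ} := by
  set E := EuclideanSpace ℝ (Fin n)
  set gens : Set (E →ₗ[ℝ] E) :=
    {σ | ∃ P : Submodule ℝ E, finrank ℝ P = m ∧ σ = projEndo P} with hgens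
  apply Set.eq_of_subset_of_subset
  · -- span ⊆ symmetric
    intro σ hσ
    induction hσ using Submodule.span_induction with
    | mem σ hσ =>
      obtain ⟨P, _, rfl⟩ := hσ
      exact projEndo_isSymmetric P
    | zero => intro x y; simp
    | add σ τ _ _ h1 h2 => intro x y; simp [LinearMap.add_apply, inner_add_left,
        inner_add_right, h1 x y, h2 x y]
    | smul c σ _ h => intro x y; simp [LinearMap.smul_apply, inner_smul_left,
        inner_smul_right, h x y]
  · -- symmetric ⊆ span
    intro σ hσ
    have hfr : finrank ℝ E = n := finrank_euclideanSpace_fin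
    set b := hσ.eigenvectorBasis hfr with hb
    set μ := hσ.eigenvalues hfr with hμ
    -- each rank one projection onto an eigenline is in the span
    have hrk : ∀ i : Fin n, rkOne (b i) ∈ Submodule.span ℝ gens := by
      intro i
      obtain ⟨T, hiT, hTcard⟩ : ∃ T : Finset (Fin n), {i} ⊆ T ∧ T.card = m + 1 := by
        apply Finset.exists_superset_card_eq
        · simpa using Nat.succ_le_of_lt hm
        · simpa using hmn
      have hiT' : i ∈ T := hiT (Finset.mem_singleton_self i)
      set P : Fin n → Submodule ℝ E := fun j => Submodule.span ℝ (b '' ↑(T.erase j)) with hP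
      have hproj : ∀ j ∈ T, projEndo (P j) = (∑ k ∈ T, rkOne (b k)) - rkOne (b j) := by
        intro j hj
        rw [hP, projEndo_span_orthonormal, Finset.sum_erase_eq_sub hj]
      have hmem : ∀ j ∈ T, projEndo (P j) ∈ Submodule.span ℝ gens := by
        intro j hj
        apply Submodule.subset_span
        refine ⟨P j, ?_, rfl⟩
        rw [hP, finrank_span_orthonormal, Finset.card_erase_of_mem hj, hTcard]
        omega
      set S : E →ₗ[ℝ] E := ∑ k ∈ T, rkOne (b k) with hS
      have key : (m : ℝ) • rkOne (b i) =
          (∑ j ∈ T.erase i, projEndo (P j)) - ((m : ℝ) - 1) • projEndo (P i) := by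
        have h1 : ∑ j ∈ T.erase i, projEndo (P j) =
            ((m : ℝ)) • S - (S - rkOne (b i)) := by
          have hce : (T.erase i).card = m := by
            rw [Finset.card_erase_of_mem hiT', hTcard]
            omega
          have h2 : ∑ j ∈ T.erase i, projEndo (P j) =
              ∑ j ∈ T.erase i, (S - rkOne (b j)) :=
            Finset.sum_congr rfl fun j hj => hproj j (Finset.mem_of_mem_erase hj)
          rw [h2, Finset.sum_sub_distrib, Finset.sum_const, hce,
            Finset.sum_erase_eq_sub hiT', ← hS, ← Nat.cast_smul_eq_nsmul ℝ]
        rw [h1, hproj i hiT']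
        module
      have : rkOne (b i) = (m : ℝ)⁻¹ •
          ((∑ j ∈ T.erase i, projEndo (P j)) - ((m : ℝ) - 1) • projEndo (P i)) := by
        rw [← key, smul_smul, inv_mul_cancel₀ (by exact_mod_cast hm.ne'), one_smul]
      rw [this]
      exact Submodule.smul_mem _ _ (Submodule.sub_mem _
        (Submodule.sum_mem _ fun j hj => hmem j (Finset.mem_of_mem_erase hj))
        (Submodule.smul_mem _ _ (hmem i hiT')))
    -- σ is a linear combination of the rank-one eigenprojections
    have hdecomp : σ = ∑ i : Fin n, (μ i : ℝ) • rkOne (b i) := by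
      apply b.toBasis.ext
      intro j
      rw [OrthonormalBasis.coe_toBasis]
      have := hσ.apply_eigenvectorBasis hfr j
      rw [← hb, ← hμ] at this
      rw [this]
      have hb' : ∀ p q : Fin n, (inner ℝ (b p) (b q) : ℝ) = if p = q then 1 else 0 :=
        orthonormal_iff_ite.mp b.orthonormal
      simp only [LinearMap.sum_apply, LinearMap.smul_apply, rkOne_apply]
      rw [Finset.sum_eq_single j]
      · rw [hb' j j, if_pos rfl]; simp
      · intro i _ hij
        rw [hb' i j, if_neg hij]; simp
      · simp
    rw [hdecomp]
    exact Submodule.sum_mem _ fun i _ => Submodule.smul_mem _ _ (hrk i)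
end

section
/- Suppose Y is a finite dimensional normed vectorspace over ℝ, Φ is a family of open subsets of Y, and h : ⋃Φ → {t : 0 < t < ∞} is defined by h(y) = (1/20) · sup { min{1, dist(y, Y ∖ Υ)} : Υ ∈ Φ } for y ∈ ⋃Φ. Then there exist a countable subset B of ⋃Φ and, for each b ∈ B, a function g_b : Y → ℝ with the following properties: (1) for every y ∈ B, the set B_y = { b ∈ B : B̄(b,10h(b)) ∩ B̄(y,10h(y)) ≠ ∅ } satisfies card B_y ≤ 129^{dim Y}; (2) for every b ∈ B, 0 ≤ g_b(y) ≤ 1 for all y ∈ Y, the support of g_b is contained in B̄(b,10h(b)), and the restriction of g_b to B̄(y,10h(y)) is Lipschitzian with Lipschitz constant at most 130^{dim Y} · h(y)^{-1}, for every y ∈ ⋃Φ; (3) Σ_{b ∈ B} g_b(y) = 1 for every y ∈ ⋃Φ. -/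
open Metric Set Module Topology MeasureTheory
open scoped ENNReal NNReal

open Metric Set Module Topology MeasureTheory
open scoped ENNReal NNReal

private lemma clamp_lip (a b : ℝ) : |max 0 (min 1 a) - max 0 (min 1 b)| ≤ |a - b| := by
  have h1 : |min 1 a - min 1 b| ≤ |a - b| := by
    rcases le_total a b with hab | hab <;> rcases le_total (1:ℝ) a with h1a | h1a <;>
      rcases le_total (1:ℝ) b with h1b | h1b <;>
      rw [abs_le] <;>
      constructor <;>
      simp [min_eq_left, min_eq_right, h1a, h1b] <;>
      linarith [le_abs_self (a-b), neg_abs_le (a-b)]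
  calc |max 0 (min 1 a) - max 0 (min 1 b)|
      = |max (min 1 a) 0 - max (min 1 b) 0| := by rw [max_comm (0:ℝ), max_comm (0:ℝ)]
    _ ≤ |min 1 a - min 1 b| := abs_max_sub_max_le_abs _ _ _
    _ ≤ |a - b| := h1

private lemma lipOn_of_subsingleton {α β : Type*} [PseudoEMetricSpace α] [PseudoEMetricSpace β]
    [Subsingleton α] (K : NNReal) (f : α → β) (s : Set α) : LipschitzOnWith K f s := by
  intro x hx y hy
  have : x = y := Subsingleton.elim x y
  subst this
  simp

private lemma finset_card_bound {Y : Type*} [NormedAddCommGroup Y] [NormedSpace ℝ Y]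
    [FiniteDimensional ℝ Y] {ρ : Y → ℝ} {y : Y} {r R : ℝ} (hr : 0 < r) (hR : 0 ≤ R)
    (F : Finset Y) (hρ : ∀ b ∈ F, r ≤ ρ b)
    (hdisj : ∀ b ∈ F, ∀ b' ∈ F, b ≠ b' → Disjoint (closedBall b (ρ b)) (closedBall b' (ρ b')))
    (hsub : ∀ b ∈ F, closedBall b (ρ b) ⊆ closedBall y R) :
    (F.card : ℝ) * r ^ finrank ℝ Y ≤ R ^ finrank ℝ Y := by
  borelize Y
  set n := finrank ℝ Y with hn
  set μ := (Module.finBasis ℝ Y).addHaar with hμ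
  have hc0 : μ (ball 0 1) ≠ 0 := (measure_ball_pos μ 0 one_pos).ne'
  have hctop : μ (ball 0 1) ≠ ⊤ := measure_ball_lt_top.ne
  have hsum : (F.card : ℝ≥0∞) * ENNReal.ofReal (r ^ n) * μ (ball 0 1)
      ≤ ENNReal.ofReal (R ^ n) * μ (ball 0 1) := by
    calc (F.card : ℝ≥0∞) * ENNReal.ofReal (r ^ n) * μ (ball 0 1)
        = ∑ _b ∈ F, ENNReal.ofReal (r ^ n) * μ (ball 0 1) := by
          rw [Finset.sum_const, nsmul_eq_mul, mul_assoc]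
      _ ≤ ∑ b ∈ F, μ (closedBall b (ρ b)) := by
          refine Finset.sum_le_sum (fun b hb => ?_)
          rw [Measure.addHaar_closedBall μ b (le_trans hr.le (hρ b hb))]
          exact mul_le_mul_left
            (ENNReal.ofReal_le_ofReal (pow_le_pow_left₀ hr.le (hρ b hb) n)) _
      _ = μ (⋃ b ∈ F, closedBall b (ρ b)) := by
          refine (measure_biUnion_finset ?_ (fun b _ => measurableSet_closedBall)).symm
          intro b hb b' hb' hne
          exact hdisj b hb b' hb' hne
      _ ≤ μ (closedBall y R) := measure_mono (iUnion₂_subset fun b hb => hsub b hb)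
      _ = ENNReal.ofReal (R ^ n) * μ (ball 0 1) := Measure.addHaar_closedBall μ y hR
  have h2 : (F.card : ℝ≥0∞) * ENNReal.ofReal (r ^ n) ≤ ENNReal.ofReal (R ^ n) :=
    (ENNReal.mul_le_mul_iff_left hc0 hctop).mp hsum
  have h3 : ENNReal.ofReal ((F.card : ℝ) * r ^ n) ≤ ENNReal.ofReal (R ^ n) := by
    rwa [ENNReal.ofReal_mul (by positivity), ENNReal.ofReal_natCast]
  exact (ENNReal.ofReal_le_ofReal_iff (by positivity)).mp h3

set_option maxHeartbeats 2000000 in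
/-- Partition of unity subordinate to a family `Φ` of open sets in a finite dimensional
normed space, with controlled overlap and Lipschitz constants. -/
theorem stmt_4 (Y : Type*) [NormedAddCommGroup Y] [NormedSpace ℝ Y] [FiniteDimensional ℝ Y]
    (Φ : Set (Set Y)) (hΦ : ∀ Υ ∈ Φ, IsOpen Υ)
    (h : Y → ℝ)
    (hh : ∀ y ∈ ⋃₀ Φ,
      h y = (1 / 20) * (⨆ Υ ∈ Φ, min 1 (EMetric.infEdist y Υᶜ)).toReal)
    (hpos : ∀ y ∈ ⋃₀ Φ, 0 < h y) :
    ∃ B : Set Y, B.Countable ∧ B ⊆ ⋃₀ Φ ∧ ∃ g : Y → Y → ℝ,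
      (∀ y ∈ B,
        {b ∈ B | (closedBall b (10 * h b) ∩ closedBall y (10 * h y)).Nonempty}.encard
          ≤ ((129 : ℕ∞) ^ finrank ℝ Y)) ∧
      (∀ b ∈ B, (∀ y, 0 ≤ g b y ∧ g b y ≤ 1) ∧
        tsupport (g b) ⊆ closedBall b (10 * h b) ∧
        ∀ y ∈ ⋃₀ Φ,
          LipschitzOnWith (Real.toNNReal ((130 : ℝ) ^ finrank ℝ Y / h y)) (g b)
            (closedBall y (10 * h y))) ∧
      (∀ y ∈ ⋃₀ Φ, HasSum (fun b : B => g b y) 1) := by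
  classical
  set n := finrank ℝ Y with hn
  set U := ⋃₀ Φ with hUdef
  set F : Y → ℝ≥0∞ := fun x => ⨆ Υ ∈ Φ, min 1 (EMetric.infEdist x Υᶜ) with hFdef
  have hF_le_one : ∀ x : Y, F x ≤ 1 := fun x => iSup₂_le fun Υ _ => min_le_left _ _
  have hFtop : ∀ x, F x ≠ ⊤ := fun x => ((hF_le_one x).trans_lt ENNReal.one_lt_top).ne
  have hF_lip : ∀ x z : Y, F x ≤ F z + edist x z := by
    intro x z
    refine iSup₂_le fun Υ hΥ => ?_
    calc min 1 (EMetric.infEdist x Υᶜ)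
        ≤ min 1 (EMetric.infEdist z Υᶜ + edist x z) :=
          min_le_min le_rfl EMetric.infEdist_le_infEdist_add_edist
      _ ≤ min (1 + edist x z) (EMetric.infEdist z Υᶜ + edist x z) := min_le_min le_self_add le_rfl
      _ = min 1 (EMetric.infEdist z Υᶜ) + edist x z := min_add_add_right 1 _ _
      _ ≤ F z + edist x z := add_le_add_left (le_iSup₂ (f := fun Υ _ => min 1 (EMetric.infEdist z Υᶜ)) Υ hΥ) _
  have hhval : ∀ y ∈ U, F y = ENNReal.ofReal (20 * h y) := by
    intro y hy
    have h1 : (F y).toReal = 20 * h y := by rw [hh y hy]; ring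
    rw [← h1, ENNReal.ofReal_toReal (hFtop y)]
  have hlip : ∀ x ∈ U, ∀ z ∈ U, h x ≤ h z + (1/20) * dist x z := by
    intro x hx z hz
    have h1 : ENNReal.ofReal (20 * h x) ≤ ENNReal.ofReal (20 * h z) + edist x z := by
      rw [← hhval x hx, ← hhval z hz]; exact hF_lip x z
    have htop : ENNReal.ofReal (20 * h z) + edist x z ≠ ⊤ :=
      ENNReal.add_ne_top.2 ⟨ENNReal.ofReal_ne_top, edist_ne_top x z⟩
    have h2 := ENNReal.toReal_mono htop h1
    rw [ENNReal.toReal_add ENNReal.ofReal_ne_top (edist_ne_top x z),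
      ENNReal.toReal_ofReal (by linarith [hpos x hx]),
      ENNReal.toReal_ofReal (by linarith [hpos z hz]), ← dist_edist] at h2
    linarith
  have hball : ∀ y ∈ U, ∀ z ∈ closedBall y (10 * h y), z ∈ U := by
    intro y hy
    have hy0 := hpos y hy
    have h15 : ENNReal.ofReal (15 * h y) < F y := by
      rw [hhval y hy]
      exact (ENNReal.ofReal_lt_ofReal_iff (by linarith)).2 (by linarith)
    obtain ⟨Υ, hmem⟩ := lt_iSup_iff.mp h15
    by_cases hΥΦ : Υ ∈ Φ
    · rw [iSup_pos hΥΦ] at hmem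
      have hinf : ENNReal.ofReal (15 * h y) < EMetric.infEdist y Υᶜ :=
        hmem.trans_le (min_le_right _ _)
      intro z hz
      refine mem_sUnion.2 ⟨Υ, hΥΦ, ?_⟩
      by_contra hzc
      have h3 : EMetric.infEdist y Υᶜ ≤ edist y z := EMetric.infEdist_le_edist_of_mem hzc
      have h4 : edist y z ≤ ENNReal.ofReal (10 * h y) := by
        rw [edist_dist]
        exact ENNReal.ofReal_le_ofReal (by rw [dist_comm]; exact mem_closedBall.1 hz)
      have := (hinf.trans_le (h3.trans h4))
      rw [ENNReal.ofReal_lt_ofReal_iff (by linarith)] at this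
      linarith
    · rw [iSup_neg hΥΦ] at hmem
      exact absurd hmem (by simp)
  -- Zorn: maximal separated set
  set Sep : Set (Set Y) :=
    {s | s ⊆ U ∧ ∀ b ∈ s, ∀ b' ∈ s, b ≠ b' → h b + h b' < dist b b'} with hSepdef
  obtain ⟨B, hBmax⟩ : ∃ B, Maximal (· ∈ Sep) B := by
    refine zorn_subset Sep fun c hcS hchain => ⟨⋃₀ c, ⟨?_, ?_⟩, fun s hs => subset_sUnion_of_mem hs⟩
    · exact sUnion_subset fun s hs => (hcS hs).1
    · intro b hb b' hb' hne
      obtain ⟨s, hs, hbs⟩ := hb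
      obtain ⟨s', hs', hbs'⟩ := hb'
      rcases hchain.total hs hs' with hss | hss
      · exact (hcS hs').2 b (hss hbs) b' hbs' hne
      · exact (hcS hs).2 b hbs b' (hss hbs') hne
  have hBU : B ⊆ U := hBmax.1.1
  have hBsep : ∀ b ∈ B, ∀ b' ∈ B, b ≠ b' → h b + h b' < dist b b' := hBmax.1.2
  have hBcov : ∀ y ∈ U, ∃ b ∈ B, dist y b ≤ h y + h b := by
    intro y hy
    by_contra hcon
    push_neg at hcon
    have hyB : y ∉ B := by
      intro hyB
      have := hcon y hyB
      simp only [dist_self] at this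
      linarith [hpos y hy]
    have hins : insert y B ∈ Sep := by
      constructor
      · exact insert_subset hy hBU
      · intro b hb b' hb' hne
        rcases hb with rfl | hb <;> rcases hb' with rfl | hb'
        · exact absurd rfl hne
        · exact hcon b' hb'
        · have := hcon b hb; rw [dist_comm]; linarith
        · exact hBsep b hb b' hb' hne
    exact hyB (hBmax.2 hins (subset_insert y B) (mem_insert y B))
  have hBcov5 : ∀ z ∈ U, ∃ b ∈ B, dist z b ≤ 5 * h b := by
    intro z hz
    obtain ⟨b, hbB, hd⟩ := hBcov z hz
    have hbU := hBU hbB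
    have h1 := hlip z hz b hbU
    have hb0 := hpos b hbU
    have hz0 := hpos z hz
    have h2 : h z ≤ h b + (1/20) * (h z + h b) := by
      refine h1.trans ?_
      have := mul_le_mul_of_nonneg_left hd (by norm_num : (0:ℝ) ≤ 1/20)
      linarith
    exact ⟨b, hbB, by linarith⟩
  have hBcount : B.Countable := by
    obtain ⟨D, hDc, hDd⟩ := TopologicalSpace.exists_countable_dense Y
    have hsel : ∀ b ∈ B, ∃ x, x ∈ D ∧ x ∈ ball b (h b) := by
      intro b hb
      have hne : (ball b (h b)).Nonempty := ⟨b, by simp [hpos b (hBU hb)]⟩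
      obtain ⟨x, hxD, hxb⟩ := hDd.exists_mem_open isOpen_ball hne
      exact ⟨x, hxD, hxb⟩
    choose! d hdD hdball using hsel
    refine MapsTo.countable_of_injOn (f := d) (fun b hb => hdD b hb) ?_ hDc
    intro b hb b' hb' heq
    by_contra hne
    have h1 : dist (d b) b < h b := mem_ball.1 (hdball b hb)
    have h2 : dist (d b') b' < h b' := mem_ball.1 (hdball b' hb')
    have h3 := hBsep b hb b' hb' hne
    have h4 : dist b b' ≤ dist b (d b) + dist (d b') b' := by
      rw [heq] at *
      exact dist_triangle b (d b') b'
    rw [dist_comm b (d b)] at h4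
    linarith
  -- comparability
  have hcomp : ∀ y ∈ U, ∀ b ∈ U, (closedBall b (10 * h b) ∩ closedBall y (10 * h y)).Nonempty →
      h y / 3 ≤ h b ∧ h b ≤ 3 * h y ∧ dist b y ≤ 40 * h y := by
    rintro y hy b hb ⟨u, hub, huy⟩
    rw [mem_closedBall] at hub huy
    have hy0 := hpos y hy
    have hb0 := hpos b hb
    have hd : dist b y ≤ 10 * h b + 10 * h y := by
      have := dist_triangle b u y
      rw [dist_comm b u] at this
      linarith
    have h1 : h b ≤ h y + (1/20) * dist b y := hlip b hb y hy
    have h2 : h y ≤ h b + (1/20) * dist b y := by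
      have := hlip y hy b hb
      rwa [dist_comm y b] at this
    have hd20 : (1/20) * dist b y ≤ (1/20) * (10 * h b + 10 * h y) :=
      mul_le_mul_of_nonneg_left hd (by norm_num)
    refine ⟨by linarith, by linarith, by linarith⟩
  -- counting
  set T : Y → Set Y :=
    fun y => {b ∈ B | (closedBall b (10 * h b) ∩ closedBall y (10 * h y)).Nonempty} with hTdef
  have hTbound : ∀ y ∈ U, ∀ F' : Finset Y, ↑F' ⊆ T y → F'.card ≤ 129 ^ n := by
    intro y hy F' hF'
    have hy0 := hpos y hy
    have key : (F'.card : ℝ) * (h y / 3) ^ n ≤ (43 * h y) ^ n := by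
      refine finset_card_bound (ρ := h) (y := y) (by linarith) (by linarith) F' ?_ ?_ ?_
      · intro b hbF
        exact (hcomp y hy b (hBU (hF' hbF).1) (hF' hbF).2).1
      · intro b hb b' hb' hne
        exact closedBall_disjoint_closedBall (hBsep b (hF' hb).1 b' (hF' hb').1 hne)
      · intro b hbF z hz
        obtain ⟨h3, h3', hd⟩ := hcomp y hy b (hBU (hF' hbF).1) (hF' hbF).2
        rw [mem_closedBall] at hz ⊢
        have htri := dist_triangle z b y
        linarith
    have hpow : (43 * h y : ℝ) ^ n = 129 ^ n * (h y / 3) ^ n := by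
      rw [← mul_pow]; ring_nf
    have hppos : (0:ℝ) < (h y / 3) ^ n := by positivity
    have hcard : (F'.card : ℝ) ≤ 129 ^ n := by
      rw [hpow] at key
      exact le_of_mul_le_mul_right key hppos
    exact_mod_cast hcard
  have hTfin : ∀ y ∈ U, (T y).Finite := by
    intro y hy
    by_contra hinf
    obtain ⟨F', hFsub, hFcard⟩ := Set.Infinite.exists_subset_card_eq hinf (129 ^ n + 1)
    have := hTbound y hy F' hFsub
    omega
  have hTcard : ∀ y ∈ U, (T y).encard ≤ (129 : ℕ∞) ^ n := by
    intro y hy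
    have hfin := hTfin y hy
    rw [Set.Finite.encard_eq_coe_toFinset_card hfin]
    have hc : hfin.toFinset.card ≤ 129 ^ n := hTbound y hy hfin.toFinset (by simp)
    exact_mod_cast hc
  -- bump functions
  set φ : Y → Y → ℝ := fun b z => max 0 (min 1 ((10 * h b - dist z b) / (5 * h b))) with hφdef
  have hφ0 : ∀ b z, 0 ≤ φ b z := fun b z => le_max_left _ _
  have hφ1 : ∀ b z, φ b z ≤ 1 := fun b z => max_le zero_le_one (min_le_left _ _)
  have hφsupp : ∀ b, 0 < h b → ∀ z, 10 * h b < dist z b → φ b z = 0 := by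
    intro b hb z hz
    have ht : (10 * h b - dist z b) / (5 * h b) < 0 :=
      div_neg_of_neg_of_pos (by linarith) (by linarith)
    have : min 1 ((10 * h b - dist z b) / (5 * h b)) ≤ 0 := (min_le_right _ _).trans ht.le
    simp only [hφdef]
    exact max_eq_left this
  have hφone : ∀ b, 0 < h b → ∀ z, dist z b ≤ 5 * h b → φ b z = 1 := by
    intro b hb z hz
    have ht : (1:ℝ) ≤ (10 * h b - dist z b) / (5 * h b) := by
      rw [le_div_iff₀ (by linarith)]
      linarith
    simp [hφdef, min_eq_left ht]
  have hφlip : ∀ b, 0 < h b → ∀ z w : Y, |φ b z - φ b w| ≤ (1 / (5 * h b)) * dist z w := by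
    intro b hb z w
    calc |φ b z - φ b w|
        ≤ |(10 * h b - dist z b) / (5 * h b) - (10 * h b - dist w b) / (5 * h b)| :=
          clamp_lip _ _
      _ = |dist w b - dist z b| / (5 * h b) := by
          rw [div_sub_div_same, abs_div, abs_of_pos (by linarith : (0:ℝ) < 5 * h b)]
          ring_nf
      _ ≤ dist z w / (5 * h b) := by
          refine (div_le_div_iff_of_pos_right (by linarith : (0:ℝ) < 5 * h b)).mpr ?_
          rw [dist_comm z w]
          exact abs_dist_sub_le w z b
      _ = (1 / (5 * h b)) * dist z w := by ring
  have hyball : ∀ y ∈ U, y ∈ closedBall y (10 * h y) :=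
    fun y hy => mem_closedBall_self (by linarith [hpos y hy])
  have hvanish : ∀ y ∈ U, ∀ z ∈ closedBall y (10 * h y), ∀ b ∈ B, b ∉ T y → φ b z = 0 := by
    intro y hy z hz b hbB hbT
    by_contra hne
    have hd : dist z b ≤ 10 * h b := by
      by_contra hd
      push_neg at hd
      exact hne (hφsupp b (hpos b (hBU hbB)) z hd)
    exact hbT ⟨hbB, ⟨z, mem_closedBall.2 hd, hz⟩⟩
  have hφoutside : ∀ z, z ∉ U → ∀ b ∈ B, φ b z = 0 := by
    intro z hz b hbB
    by_contra hne
    have hd : dist z b ≤ 10 * h b := by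
      by_contra hd
      push_neg at hd
      exact hne (hφsupp b (hpos b (hBU hbB)) z hd)
    exact hz (hball b (hBU hbB) z (mem_closedBall.2 hd))
  have hSex : ∀ z : Y, ∃ s : ℝ, HasSum (fun b : ↥B => φ ↑b z) s := by
    intro z
    by_cases hz : z ∈ U
    · set G : Finset ↥B :=
        (Set.Finite.preimage (Subtype.val_injective.injOn) (hTfin z hz)).toFinset with hG
      refine ⟨∑ b ∈ G, φ ↑b z, hasSum_sum_of_ne_finset_zero ?_⟩
      intro b hbG
      refine hvanish z hz z (hyball z hz) ↑b b.2 ?_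
      intro hbT
      exact hbG (by simp only [hG, Set.Finite.mem_toFinset, Set.mem_preimage]; exact hbT)
    · refine ⟨0, ?_⟩
      have hzero : (fun b : ↥B => φ ↑b z) = fun _ => 0 :=
        funext fun b => hφoutside z hz ↑b b.2
      rw [hzero]
      exact hasSum_zero
  choose S hS using hSex
  have hS0 : ∀ z, 0 ≤ S z :=
    fun z => hasSum_le (fun b : ↥B => hφ0 ↑b z) hasSum_zero (hS z)
  have hSle : ∀ z, ∀ b : ↥B, φ ↑b z ≤ S z :=
    fun z b => le_hasSum (hS z) b (fun _ _ => hφ0 _ _)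
  have hS1 : ∀ z ∈ U, 1 ≤ S z := by
    intro z hz
    obtain ⟨b, hbB, hd⟩ := hBcov5 z hz
    have := hSle z ⟨b, hbB⟩
    rwa [hφone b (hpos b (hBU hbB)) z hd] at this
  have hSrep : ∀ y ∈ U, ∃ G : Finset ↥B, G.card ≤ 129 ^ n ∧ (∀ b ∈ G, (b : Y) ∈ T y) ∧
      ∀ z ∈ closedBall y (10 * h y), S z = ∑ b ∈ G, φ ↑b z := by
    intro y hy
    set G : Finset ↥B :=
      (Set.Finite.preimage (Subtype.val_injective.injOn) (hTfin y hy)).toFinset with hG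
    have hmemG : ∀ b : ↥B, b ∈ G ↔ (b : Y) ∈ T y := by
      intro b
      simp only [hG, Set.Finite.mem_toFinset, Set.mem_preimage]
    refine ⟨G, ?_, fun b hb => (hmemG b).1 hb, ?_⟩
    · have himg : (G.image Subtype.val).card = G.card :=
        Finset.card_image_of_injective _ Subtype.val_injective
      rw [← himg]
      refine hTbound y hy _ ?_
      intro x hx
      simp only [Finset.coe_image, Set.mem_image, Finset.mem_coe] at hx
      obtain ⟨b, hbG, rfl⟩ := hx
      exact (hmemG b).1 hbG
    · intro z hz
      refine (hS z).unique (hasSum_sum_of_ne_finset_zero ?_)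
      intro b hbG
      exact hvanish y hy z hz ↑b b.2 (fun hbT => hbG ((hmemG b).2 hbT))
  choose! GG hGGcard hGGmem hGGrep using hSrep
  have hφball : ∀ y ∈ U, ∀ b ∈ T y, ∀ z w : Y,
      |φ b z - φ b w| ≤ (3 / (5 * h y)) * dist z w := by
    intro y hy b hbT z w
    have hbU : b ∈ U := hBU hbT.1
    have h3 := (hcomp y hy b hbU hbT.2).1
    have hb0 := hpos b hbU
    have hy0 := hpos y hy
    calc |φ b z - φ b w| ≤ (1 / (5 * h b)) * dist z w := hφlip b hb0 z w
      _ ≤ (3 / (5 * h y)) * dist z w := by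
          refine mul_le_mul_of_nonneg_right ?_ dist_nonneg
          rw [div_le_div_iff₀ (by linarith) (by linarith)]
          linarith
  have hSlip : ∀ y ∈ U, ∀ z ∈ closedBall y (10 * h y), ∀ w ∈ closedBall y (10 * h y),
      |S z - S w| ≤ ((129:ℝ) ^ n * (3 / (5 * h y))) * dist z w := by
    intro y hy z hz w hw
    have hy0 := hpos y hy
    rw [hGGrep y hy z hz, hGGrep y hy w hw, ← Finset.sum_sub_distrib]
    calc |∑ b ∈ GG y, (φ ↑b z - φ ↑b w)|
        ≤ ∑ b ∈ GG y, |φ ↑b z - φ ↑b w| := Finset.abs_sum_le_sum_abs _ _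
      _ ≤ ∑ _b ∈ GG y, (3 / (5 * h y)) * dist z w :=
          Finset.sum_le_sum (fun b hb => hφball y hy ↑b (hGGmem y hy b hb) z w)
      _ = ((GG y).card : ℝ) * ((3 / (5 * h y)) * dist z w) := by
          rw [Finset.sum_const, nsmul_eq_mul]
      _ ≤ (129:ℝ) ^ n * ((3 / (5 * h y)) * dist z w) := by
          refine mul_le_mul_of_nonneg_right ?_ (by positivity)
          exact_mod_cast hGGcard y hy
      _ = ((129:ℝ) ^ n * (3 / (5 * h y))) * dist z w := by ring
  refine ⟨B, hBcount, hBU, fun b z => φ b z / S z, ?_, ?_, ?_⟩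
  · -- (1) overlap bound
    intro y hyB
    exact hTcard y (hBU hyB)
  · -- (2)
    intro b hbB
    have hb0 : 0 < h b := hpos b (hBU hbB)
    refine ⟨?_, ?_, ?_⟩
    · intro z
      refine ⟨div_nonneg (hφ0 b z) (hS0 z), ?_⟩
      show φ b z / S z ≤ 1
      by_cases hz : z ∈ U
      · exact div_le_one_of_le₀ (hSle z ⟨b, hbB⟩) (hS0 z)
      · rw [hφoutside z hz b hbB, zero_div]
        exact zero_le_one
    · -- tsupport
      refine closure_minimal ?_ isClosed_closedBall
      intro z hz
      simp only [Function.mem_support] at hz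
      by_contra hzb
      have hd : 10 * h b < dist z b := by simpa [mem_closedBall, not_le] using hzb
      exact hz (by rw [hφsupp b hb0 z hd, zero_div])
    · -- Lipschitz
      intro y hyU
      rcases subsingleton_or_nontrivial Y with hsub | hnt
      · exact lipOn_of_subsingleton _ _ _
      · have hn1 : 1 ≤ n := Module.finrank_pos
        have hy0 := hpos y hyU
        rw [lipschitzOnWith_iff_dist_le_mul]
        intro z hz w hw
        have hzU := hball y hyU z hz
        have hwU := hball y hyU w hw
        have hSz := hS1 z hzU
        have hSw := hS1 w hwU
        rw [Real.dist_eq, Real.coe_toNNReal _ (by positivity)]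
        have key : |φ b z / S z - φ b w / S w| ≤ |φ b z - φ b w| + |S z - S w| := by
          have hKz : (0:ℝ) < S z := by linarith
          have hKw : (0:ℝ) < S w := by linarith
          have hid : φ b z / S z - φ b w / S w
              = (φ b z - φ b w) / S z + φ b w * (S w - S z) / (S z * S w) := by
            field_simp
            ring
          rw [hid]
          have e1 : |(φ b z - φ b w) / S z| = |φ b z - φ b w| / S z := by
            rw [abs_div, abs_of_pos hKz]
          have e2 : |φ b w * (S w - S z) / (S z * S w)|
              = φ b w * |S w - S z| / (S z * S w) := by
            rw [abs_div, abs_mul, abs_of_pos (mul_pos hKz hKw), abs_of_nonneg (hφ0 b w)]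
          have d1 : |φ b z - φ b w| / S z ≤ |φ b z - φ b w| := div_le_self (abs_nonneg _) hSz
          have d2 : φ b w * |S w - S z| / (S z * S w) ≤ |S w - S z| := by
            have hprod : (1:ℝ) ≤ S z * S w := by nlinarith
            rw [div_le_iff₀ (mul_pos hKz hKw)]
            have t1 : φ b w * |S w - S z| ≤ |S w - S z| := by
              nlinarith [abs_nonneg (S w - S z), hφ1 b w, hφ0 b w]
            nlinarith [abs_nonneg (S w - S z)]
          calc |(φ b z - φ b w) / S z + φ b w * (S w - S z) / (S z * S w)|
              ≤ |(φ b z - φ b w) / S z| + |φ b w * (S w - S z) / (S z * S w)| := abs_add_le _ _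
            _ ≤ |φ b z - φ b w| + |S w - S z| := by rw [e1, e2]; exact add_le_add d1 d2
            _ = |φ b z - φ b w| + |S z - S w| := by rw [abs_sub_comm (S w) (S z)]
        have hbφ : |φ b z - φ b w| ≤ (3 / (5 * h y)) * dist z w := by
          by_cases hbT : b ∈ T y
          · exact hφball y hyU b hbT z w
          · rw [hvanish y hyU z hz b hbB hbT, hvanish y hyU w hw b hbB hbT]
            simp only [sub_zero, abs_zero]
            positivity
        have hbS := hSlip y hyU z hz w hw
        have harith : 3 / (5 * h y) + (129:ℝ) ^ n * (3 / (5 * h y)) ≤ (130:ℝ) ^ n / h y := by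
          have h129 : (129:ℝ) ^ n ≤ 130 ^ n := pow_le_pow_left₀ (by norm_num) (by norm_num) n
          have h3le : (3:ℝ) ≤ 130 ^ n := by
            calc (3:ℝ) ≤ 130 ^ 1 := by norm_num
              _ ≤ 130 ^ n := pow_le_pow_right₀ (by norm_num) hn1
          have heq : 3 / (5 * h y) + (129:ℝ) ^ n * (3 / (5 * h y))
              = (3 + 3 * 129 ^ n) / (5 * h y) := by ring
          rw [heq, div_le_div_iff₀ (by linarith) hy0]
          nlinarith
        calc |φ b z / S z - φ b w / S w|
            ≤ |φ b z - φ b w| + |S z - S w| := key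
          _ ≤ (3 / (5 * h y)) * dist z w + ((129:ℝ) ^ n * (3 / (5 * h y))) * dist z w :=
              add_le_add hbφ hbS
          _ = (3 / (5 * h y) + (129:ℝ) ^ n * (3 / (5 * h y))) * dist z w := by ring
          _ ≤ ((130:ℝ) ^ n / h y) * dist z w := mul_le_mul_of_nonneg_right harith dist_nonneg
  · -- (3) partition of unity
    intro y hyU
    have hSy : S y ≠ 0 := by linarith [hS1 y hyU]
    have := (hS y).div_const (S y)
    rwa [div_self hSy] at this
end

section
/- Suppose Y is a finite dimensional normed vectorspace over ℝ, D is a closed subset of Y, and 0 < s < ∞. Then there exists a countable family G of functions from Y to ℝ with the following properties: (1) for every g ∈ G, the support of g is contained in the open ball B(d,s) for some d ∈ D; (2) for every y ∈ Y, card ( { g ∈ G : B̄(y, s/4) ∩ spt g ≠ ∅ } ) ≤ 129^{dim Y}; (3) D is contained in the interior of { y : Σ_{g ∈ G} g(y) = 1 }, and Σ_{g ∈ G} g(y) ≤ 1 for every y ∈ Y; (4) for every g ∈ G, 0 ≤ g(y) ≤ 1 for all y ∈ Y and g is Lipschitzian with Lipschitz constant at most 40 · 130^{dim Y} · s^{-1}.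 -/
open Metric Set Module Topology MeasureTheory
open scoped ENNReal

section Aux

variable {Y : Type*} [NormedAddCommGroup Y] [NormedSpace ℝ Y] [FiniteDimensional ℝ Y]


/-- Volumetric packing bound for a finite separated set in a ball. -/
theorem aux_pack {r R : ℝ} (hr : 0 < r) (hR : 0 ≤ R) (y : Y) (P : Finset Y)
    (hPb : ∀ t ∈ P, dist t y ≤ R)
    (hsep : (P : Set Y).Pairwise fun a b => r ≤ dist a b) :
    (P.card : ℝ) * (r / 2) ^ finrank ℝ Y ≤ (R + r / 2) ^ finrank ℝ Y := by
  borelize Y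
  set n := finrank ℝ Y with hn
  let b := Basis.ofVectorSpace ℝ Y
  let μ : Measure Y := b.addHaar
  have hμ : μ.IsAddHaarMeasure := isAddHaarMeasure_basis_addHaar b
  have hdisj : (P : Set Y).PairwiseDisjoint fun t => ball t (r / 2) := by
    intro a ha c hc hac
    exact ball_disjoint_ball (by linarith [hsep ha hc hac])
  have hsub : ∀ t ∈ P, ball t (r / 2) ⊆ closedBall y (R + r / 2) := by
    intro t ht x hx
    rw [mem_ball] at hx
    rw [mem_closedBall]
    calc dist x y ≤ dist x t + dist t y := dist_triangle _ _ _
      _ ≤ R + r / 2 := by linarith [hPb t ht]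
  have hUnion : μ (⋃ t ∈ P, ball t (r / 2)) = ∑ t ∈ P, μ (ball t (r / 2)) :=
    measure_biUnion_finset hdisj fun t _ => measurableSet_ball
  have hball : ∀ t : Y, μ (ball t (r / 2)) = ENNReal.ofReal ((r / 2) ^ n) * μ (ball 0 1) :=
    fun t => Measure.addHaar_ball_of_pos μ t (by linarith)
  have hbig : μ (closedBall y (R + r / 2)) = ENNReal.ofReal ((R + r / 2) ^ n) * μ (ball 0 1) :=
    Measure.addHaar_closedBall μ y (by linarith)
  have hle : (P.card : ℝ≥0∞) * ENNReal.ofReal ((r / 2) ^ n) * μ (ball 0 1)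
      ≤ ENNReal.ofReal ((R + r / 2) ^ n) * μ (ball 0 1) := by
    calc (P.card : ℝ≥0∞) * ENNReal.ofReal ((r / 2) ^ n) * μ (ball 0 1)
        = ∑ t ∈ P, μ (ball t (r / 2)) := by
          rw [Finset.sum_congr rfl fun t _ => hball t, Finset.sum_const, nsmul_eq_mul, mul_assoc]
      _ = μ (⋃ t ∈ P, ball t (r / 2)) := hUnion.symm
      _ ≤ μ (closedBall y (R + r / 2)) := measure_mono (iUnion₂_subset hsub)
      _ = _ := hbig
  have hpos : μ (ball 0 1) ≠ 0 := (measure_ball_pos μ 0 one_pos).ne'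
  have htop : μ (ball 0 1) ≠ ⊤ := measure_ball_lt_top.ne
  have hle2 : (P.card : ℝ≥0∞) * ENNReal.ofReal ((r / 2) ^ n)
      ≤ ENNReal.ofReal ((R + r / 2) ^ n) := (ENNReal.mul_le_mul_iff_left hpos htop).mp hle
  have h1 : ((P.card : ℝ≥0∞) * ENNReal.ofReal ((r / 2) ^ n))
      = ENNReal.ofReal ((P.card : ℝ) * (r / 2) ^ n) := by
    rw [ENNReal.ofReal_mul (by positivity), ENNReal.ofReal_natCast]
  rw [h1] at hle2
  exact (ENNReal.ofReal_le_ofReal_iff (by positivity)).mp hle2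

/-- A separated set in a ball is finite. -/
theorem aux_finite {r R : ℝ} (hr : 0 < r) (hR : 0 ≤ R) (y : Y) {P : Set Y}
    (hPb : ∀ t ∈ P, dist t y ≤ R)
    (hsep : P.Pairwise fun a b => r ≤ dist a b) : P.Finite := by
  by_contra hinf
  have hinf : P.Infinite := hinf
  obtain ⟨N, hN⟩ := exists_nat_gt ((R + r / 2) ^ finrank ℝ Y / (r / 2) ^ finrank ℝ Y)
  obtain ⟨Q, hQP, hQfin, hQcard⟩ := hinf.exists_subset_ncard_eq (N + 1)
  obtain ⟨Qf, rfl⟩ : ∃ Qf : Finset Y, (Qf : Set Y) = Q := ⟨hQfin.toFinset, hQfin.coe_toFinset⟩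
  rw [Set.ncard_coe_finset] at hQcard
  have hb := aux_pack hr hR y Qf (fun t ht => hPb t (hQP ht))
    (hsep.mono hQP)
  rw [hQcard] at hb
  have hpow : (0:ℝ) < (r / 2) ^ finrank ℝ Y := by positivity
  rw [div_lt_iff₀ hpow] at hN
  push_cast at hb hN
  nlinarith

/-- Counting: a (s/4)-separated finite set within distance 3s/4 of y has at most 7^n elements. -/
theorem aux_count {s : ℝ} (hs : 0 < s) (y : Y) {P : Set Y}
    (hPb : ∀ t ∈ P, dist t y ≤ 3 * s / 4)
    (hsep : P.Pairwise fun a b => s / 4 ≤ dist a b) :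
    P.Finite ∧ P.ncard ≤ 7 ^ finrank ℝ Y := by
  have hfin : P.Finite := aux_finite (by linarith) (by linarith) y hPb hsep
  refine ⟨hfin, ?_⟩
  have hb := aux_pack (r := s/4) (R := 3*s/4) (by linarith) (by linarith) y hfin.toFinset
    (by simpa using hPb) (by rw [hfin.coe_toFinset]; exact hsep)
  have hcard : P.ncard = hfin.toFinset.card := by exact Set.ncard_eq_toFinset_card P hfin
  rw [hcard]
  have h78 : 3*s/4 + s/4/2 = 7 * (s/4/2) := by ring
  rw [h78, mul_pow] at hb
  have hpow : (0:ℝ) < (s/4/2) ^ finrank ℝ Y := by positivity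
  have : (hfin.toFinset.card : ℝ) ≤ 7 ^ finrank ℝ Y := by
    have := (mul_le_mul_iff_left₀ hpow).mp hb
    exact this
  exact_mod_cast this

end Aux

/-- Partition of unity near a closed set `D` in a finite dimensional normed space, at scale
`s`, with controlled overlap and Lipschitz constants. -/
theorem stmt_5 (Y : Type*) [NormedAddCommGroup Y] [NormedSpace ℝ Y] [FiniteDimensional ℝ Y]
    (D : Set Y) (hD : IsClosed D) (s : ℝ) (hs : 0 < s) :
    ∃ G : Set (Y → ℝ), G.Countable ∧
      (∀ g ∈ G, ∃ d ∈ D, tsupport g ⊆ ball d s) ∧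
      (∀ y : Y, {g ∈ G | (closedBall y (s / 4) ∩ tsupport g).Nonempty}.encard
          ≤ ((129 : ℕ∞) ^ finrank ℝ Y)) ∧
      (D ⊆ interior {y | ∑' g : G, (g : Y → ℝ) y = 1}) ∧
      (∀ y : Y, ∑' g : G, (g : Y → ℝ) y ≤ 1) ∧
      (∀ g ∈ G, (∀ y, 0 ≤ g y ∧ g y ≤ 1) ∧
        LipschitzWith (Real.toNNReal (40 * (130 : ℝ) ^ finrank ℝ Y / s)) g) := by
  classical
  set n := finrank ℝ Y with hn
  have hzorn := zorn_subset {T : Set Y | T ⊆ D ∧ T.Pairwise fun a b => s/4 ≤ dist a b} (by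
    intro c hcS hchain
    refine ⟨⋃₀ c, ⟨?_, ?_⟩, fun t ht => subset_sUnion_of_mem ht⟩
    · exact sUnion_subset fun t ht => (hcS ht).1
    · exact (Set.pairwise_sUnion hchain.directedOn).mpr fun t ht => (hcS ht).2)
  obtain ⟨T, hTmax⟩ := hzorn
  obtain ⟨hTD, hTsep⟩ := hTmax.prop
  have hcover : ∀ d ∈ D, ∃ t ∈ T, dist d t < s/4 := by
    by_contra hcon
    push_neg at hcon
    obtain ⟨d, hdD, hd⟩ := hcon
    have hdT : d ∉ T := by
      intro hdT
      have := hd d hdT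
      simp only [dist_self] at this
      linarith
    have hins : insert d T ∈ {T : Set Y | T ⊆ D ∧ T.Pairwise fun a b => s/4 ≤ dist a b} := by
      refine ⟨insert_subset hdD hTD, hTsep.insert fun t ht hdt => ?_⟩
      exact ⟨hd t ht, by rw [dist_comm]; exact hd t ht⟩
    exact hdT (hTmax.2 hins (subset_insert d T) (mem_insert d T))
  have hfinlocal : ∀ (y : Y) (R : ℝ), 0 ≤ R → {t ∈ T | dist t y ≤ R}.Finite := by
    intro y R hR
    exact aux_finite (r := s/4) (by linarith) hR y (fun t ht => ht.2)
      (hTsep.mono (sep_subset _ _))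
  have hTcount : T.Countable := by
    have hsub : T ⊆ ⋃ k : ℕ, {t ∈ T | dist t 0 ≤ k} := by
      intro t ht
      obtain ⟨k, hk⟩ := exists_nat_ge (dist t 0)
      exact mem_iUnion.mpr ⟨k, ht, hk⟩
    exact ((countable_iUnion fun k : ℕ => (hfinlocal (0:Y) (k:ℝ) (by positivity)).countable).mono hsub)
  -- the bump functions
  set h : Y → Y → ℝ := fun t y => max 0 (min 1 ((s/2 - dist y t)/(s/4))) with hh
  have h_nonneg : ∀ t y, 0 ≤ h t y := fun t y => le_max_left _ _
  have h_le_one : ∀ t y, h t y ≤ 1 := fun t y => max_le zero_le_one (min_le_left _ _)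
  have h_eq_one : ∀ t y, dist y t ≤ s/4 → h t y = 1 := by
    intro t y hd
    have h1 : (1:ℝ) ≤ (s/2 - dist y t)/(s/4) := by
      rw [le_div_iff₀ (by linarith)]
      linarith
    rw [hh]
    simp only [min_eq_left h1, max_eq_right zero_le_one]
  have h_one_imp : ∀ t y, h t y = 1 → dist y t ≤ s/4 := by
    intro t y hd
    by_contra hgt
    push_neg at hgt
    have h1 : (s/2 - dist y t)/(s/4) < 1 := by
      rw [div_lt_one (by linarith)]
      linarith
    have : h t y < 1 := by
      rw [hh]
      exact max_lt one_pos (lt_of_le_of_lt (min_le_right _ _) h1)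
    rw [hd] at this
    exact lt_irrefl _ this
  have h_eq_zero : ∀ t y, s/2 ≤ dist y t → h t y = 0 := by
    intro t y hd
    have h1 : (s/2 - dist y t)/(s/4) ≤ 0 :=
      div_nonpos_of_nonpos_of_nonneg (by linarith) (by linarith)
    rw [hh]
    exact max_eq_left ((min_le_right _ _).trans h1)
  have h_ne_zero_imp : ∀ t y, h t y ≠ 0 → dist y t < s/2 := by
    intro t y hne
    by_contra hge
    push_neg at hge
    exact hne (h_eq_zero t y hge)
  have h_lip : ∀ t y z, |h t y - h t z| ≤ 4/s * dist y z := by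
    intro t y z
    have l1 : |h t y - h t z| ≤
        |min 1 ((s/2 - dist y t)/(s/4)) - min 1 ((s/2 - dist z t)/(s/4))| := by
      rw [hh]
      simp only [max_comm (0:ℝ)]
      exact abs_max_sub_max_le_abs _ _ _
    have l2 : |min 1 ((s/2 - dist y t)/(s/4)) - min 1 ((s/2 - dist z t)/(s/4))| ≤
        |(s/2 - dist y t)/(s/4) - (s/2 - dist z t)/(s/4)| := by
      have := abs_min_sub_min_le_max (1:ℝ) ((s/2 - dist y t)/(s/4)) 1 ((s/2 - dist z t)/(s/4))
      simpa using this
    have l3 : (s/2 - dist y t)/(s/4) - (s/2 - dist z t)/(s/4)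
        = (dist z t - dist y t) / (s/4) := by ring
    have l4 : |(dist z t - dist y t) / (s/4)| ≤ dist y z / (s/4) := by
      rw [abs_div, abs_of_pos (by linarith : (0:ℝ) < s/4)]
      apply div_le_div_of_nonneg_right ?_ (by linarith)
      · rw [abs_sub_comm]
        exact abs_dist_sub_le y z t
    have l5 : dist y z / (s/4) = 4/s * dist y z := by
      field_simp
    calc |h t y - h t z| ≤ _ := l1
      _ ≤ _ := l2
      _ = |(dist z t - dist y t) / (s/4)| := by rw [l3]
      _ ≤ dist y z / (s/4) := l4
      _ = 4/s * dist y z := l5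
  -- the sum S and normalizer M
  set S : Y → ℝ := fun y => ∑' t : T, h (↑t) y with hS
  have hsupp_fin : ∀ y : Y, (Function.support fun t : T => h (↑t) y).Finite := by
    intro y
    have hsub : (Function.support fun t : T => h (↑t) y)
        ⊆ (fun t : T => (t : Y)) ⁻¹' {t ∈ T | dist t y ≤ s/2} := by
      intro t ht
      exact ⟨t.2, by rw [dist_comm]; exact (h_ne_zero_imp _ _ ht).le⟩
    exact (Set.Finite.preimage Subtype.coe_injective.injOn
      (hfinlocal y (s/2) (by linarith))).subset hsub
  have hsummable : ∀ y, Summable fun t : T => h (↑t) y := by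
    intro y
    apply summable_of_ne_finset_zero (s := (hsupp_fin y).toFinset)
    intro t ht
    simp only [Set.Finite.mem_toFinset] at ht
    exact Function.notMem_support.mp ht
  have hS_nonneg : ∀ y, 0 ≤ S y := fun y => tsum_nonneg fun t => h_nonneg _ _
  have hS_ge : ∀ (y : Y) (t : T), h (↑t) y ≤ S y := fun y t =>
    Summable.le_tsum (hsummable y) t fun t' _ => h_nonneg _ _
  set M : Y → ℝ := fun y => max 1 (S y) with hM
  have hM_ge1 : ∀ y, 1 ≤ M y := fun y => le_max_left _ _
  have hM_pos : ∀ y, 0 < M y := fun y => zero_lt_one.trans_le (hM_ge1 y)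
  have hMne : ∀ y, M y ≠ 0 := fun y => (hM_pos y).ne'
  have hSM : ∀ y, S y ≤ M y := fun y => le_max_right _ _
  set g : Y → Y → ℝ := fun t y => h t y / M y with hg
  have g_nonneg : ∀ t y, 0 ≤ g t y := fun t y => div_nonneg (h_nonneg t y) (hM_pos y).le
  have g_le_one : ∀ t y, g t y ≤ 1 := fun t y =>
    (div_le_one (hM_pos y)).mpr ((h_le_one t y).trans (hM_ge1 y))
  have htsupp : ∀ t, tsupport (g t) ⊆ closedBall t (s/2) := by
    intro t
    have hsub : Function.support (g t) ⊆ ball t (s/2) := by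
      intro y hy
      have hne : h t y ≠ 0 := by
        intro h0
        apply hy
        rw [hg]
        simp only [h0, zero_div]
      exact mem_ball.mpr (h_ne_zero_imp t y hne)
    exact (closure_mono hsub).trans closure_ball_subset_closedBall
  -- injectivity
  have hinj : Set.InjOn g T := by
    intro t ht t' ht' hgeq
    by_contra htt'
    have hheq : ∀ y, h t y = h t' y := by
      intro y
      have h6 : h t y / M y = h t' y / M y := congrFun hgeq y
      rw [div_eq_div_iff (hMne y) (hMne y)] at h6
      exact mul_right_cancel₀ (hMne y) h6
    have h1 : h t' t = 1 := by
      rw [← hheq t]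
      exact h_eq_one t t (by rw [dist_self]; linarith)
    have h2 : dist t t' ≤ s/4 := h_one_imp t' t h1
    have h3 : s/4 ≤ dist t t' := hTsep ht ht' htt'
    have h4 : ‖t - t'‖ = s/4 := by
      rw [← dist_eq_norm]
      linarith
    set y₀ := t + (2:ℝ)⁻¹ • (t - t') with hy₀
    have hd1 : dist y₀ t = s/8 := by
      rw [dist_eq_norm, hy₀]
      have : t + (2:ℝ)⁻¹ • (t - t') - t = (2:ℝ)⁻¹ • (t - t') := by abel
      rw [this, norm_smul, h4, norm_inv, Real.norm_ofNat]
      ring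
    have hd2 : dist y₀ t' = 3*s/8 := by
      rw [dist_eq_norm, hy₀]
      have : t + (2:ℝ)⁻¹ • (t - t') - t' = ((3:ℝ)/2) • (t - t') := by
        rw [smul_sub, smul_sub]
        module
      rw [this, norm_smul, h4, Real.norm_eq_abs, abs_of_nonneg (by norm_num : (0:ℝ) ≤ (3:ℝ)/2)]
      ring
    have e1 : h t y₀ = 1 := h_eq_one _ _ (by rw [hd1]; linarith)
    have e2 : h t' y₀ = 1 := by rw [← hheq y₀]; exact e1
    have := h_one_imp t' y₀ e2
    rw [hd2] at this
    linarith
  set G := g '' T with hG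
  have htsum_eq : ∀ y : Y, ∑' (gg : ↥G), (gg : Y → ℝ) y = S y / M y := by
    intro y
    have e1 : ∑' (t : ↥T), ((Equiv.Set.imageOfInjOn g T hinj t : Y → ℝ)) y
        = ∑' (gg : ↥G), (gg : Y → ℝ) y :=
      Equiv.tsum_eq (Equiv.Set.imageOfInjOn g T hinj) (fun gg => (gg : Y → ℝ) y)
    have e2 : ∀ t : ↥T, ((Equiv.Set.imageOfInjOn g T hinj t : Y → ℝ)) y = h (↑t) y / M y :=
      fun t => rfl
    rw [← e1]
    simp_rw [e2]
    rw [tsum_div_const]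
  refine ⟨G, hTcount.image g, ?_, ?_, ?_, ?_, ?_⟩
  · -- supports
    rintro g' ⟨t, ht, rfl⟩
    exact ⟨t, hTD ht, (htsupp t).trans (closedBall_subset_ball (by linarith))⟩
  · -- overlap count
    intro y
    set T' := {t ∈ T | dist t y ≤ 3*s/4} with hT'
    obtain ⟨hT'fin, hT'card⟩ := aux_count hs y (fun t ht => ht.2) (hTsep.mono (sep_subset _ _))
    have hsubA : {g' ∈ G | (closedBall y (s / 4) ∩ tsupport g').Nonempty} ⊆ g '' T' := by
      rintro g' ⟨⟨t, ht, rfl⟩, x, hx1, hx2⟩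
      refine ⟨t, ⟨ht, ?_⟩, rfl⟩
      have hxt : dist x t ≤ s/2 := mem_closedBall.mp (htsupp t hx2)
      have hxy : dist x y ≤ s/4 := mem_closedBall.mp hx1
      calc dist t y ≤ dist t x + dist x y := dist_triangle _ _ _
        _ ≤ 3*s/4 := by rw [dist_comm t x]; linarith
    calc {g' ∈ G | (closedBall y (s / 4) ∩ tsupport g').Nonempty}.encard
        ≤ (g '' T').encard := encard_le_encard hsubA
      _ ≤ T'.encard := encard_image_le _ _
      _ = (hT'fin.toFinset.card : ℕ∞) := by
          rw [hT'fin.encard_eq_coe_toFinset_card]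
      _ ≤ ((7^n : ℕ) : ℕ∞) := by
          rw [← Set.ncard_eq_toFinset_card _ hT'fin]
          exact_mod_cast hT'card
      _ ≤ (129 : ℕ∞) ^ n := by
          have : (7^n : ℕ) ≤ 129^n := Nat.pow_le_pow_left (by norm_num) n
          exact_mod_cast this
  · -- interior
    have hU : IsOpen (⋃ t ∈ T, ball t (s/4)) := isOpen_biUnion fun t _ => isOpen_ball
    apply Set.Subset.trans ?_ (interior_maximal ?_ hU)
    · intro d hd
      obtain ⟨t, ht, hdt⟩ := hcover d hd
      exact mem_biUnion ht (mem_ball.mpr (by rwa [dist_comm] at hdt ⊢))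
    · intro y hy
      obtain ⟨t, ht, hyt⟩ := mem_iUnion₂.mp hy
      have h1 : h t y = 1 := h_eq_one t y (mem_ball.mp hyt).le
      have hS1 : 1 ≤ S y := h1 ▸ hS_ge y ⟨t, ht⟩
      have hMS : M y = S y := max_eq_right hS1
      show ∑' (gg : ↥G), (gg : Y → ℝ) y = 1
      rw [htsum_eq y, hMS, div_self (by linarith)]
  · -- sum ≤ 1
    intro y
    rw [htsum_eq y]
    exact div_le_one_of_le₀ (hSM y) (hM_pos y).le
  · -- bounds and Lipschitz
    rintro g' ⟨t, ht, rfl⟩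
    refine ⟨fun y => ⟨g_nonneg t y, g_le_one t y⟩, ?_⟩
    have h130 : (1:ℝ) ≤ 130 ^ n := one_le_pow₀ (by norm_num)
    have hK : (0:ℝ) ≤ 40 * (130:ℝ)^n / s := by positivity
    apply LipschitzWith.of_dist_le_mul
    intro y z
    rw [Real.coe_toNNReal _ hK, Real.dist_eq]
    set d := dist y z with hd
    have hd0 : 0 ≤ d := dist_nonneg
    by_cases hnear : d < s/4
    · -- near case
      -- bound on |S y - S z|
      have hSd : |S y - S z| ≤ (7:ℝ)^n * (4/s * d) := by
        set F : Finset ↥T := (hsupp_fin y).toFinset ∪ (hsupp_fin z).toFinset with hF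
        have hSy : S y = ∑ t' ∈ F, h (↑t') y := by
          apply tsum_eq_sum
          intro t' ht'
          rw [hF, Finset.mem_union] at ht'
          push_neg at ht'
          have := ht'.1
          rw [Set.Finite.mem_toFinset] at this
          exact Function.notMem_support.mp this
        have hSz : S z = ∑ t' ∈ F, h (↑t') z := by
          apply tsum_eq_sum
          intro t' ht'
          rw [hF, Finset.mem_union] at ht'
          push_neg at ht'
          have := ht'.2
          rw [Set.Finite.mem_toFinset] at this
          exact Function.notMem_support.mp this
        have hcard : (F.card : ℝ) ≤ (7:ℝ)^n := by
          set Fim : Finset Y := F.image (fun t' : ↥T => (t' : Y)) with hFim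
          have hcardeq : Fim.card = F.card :=
            Finset.card_image_of_injective _ Subtype.coe_injective
          have hb : ∀ t'' ∈ (Fim : Set Y), dist t'' y ≤ 3 * s / 4 := by
            intro t'' ht''
            simp only [hFim, Finset.coe_image, Set.mem_image, Finset.mem_coe] at ht''
            obtain ⟨t', ht', rfl⟩ := ht''
            rw [hF, Finset.mem_union, Set.Finite.mem_toFinset, Set.Finite.mem_toFinset] at ht'
            rcases ht' with ht' | ht'
            · have := h_ne_zero_imp _ _ (Function.mem_support.mp ht')
              rw [dist_comm]
              linarith
            · have := h_ne_zero_imp _ _ (Function.mem_support.mp ht')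
              have htz : dist (↑t' : Y) z < s/2 := by rwa [dist_comm] at this
              calc dist (↑t' : Y) y ≤ dist (↑t' : Y) z + dist z y := dist_triangle _ _ _
                _ ≤ 3*s/4 := by rw [dist_comm z y]; linarith
          have hsep' : (Fim : Set Y).Pairwise fun a b => s / 4 ≤ dist a b := by
            apply hTsep.mono
            intro t'' ht''
            simp only [hFim, Finset.coe_image, Set.mem_image, Finset.mem_coe] at ht''
            obtain ⟨t', _, rfl⟩ := ht''
            exact t'.2
          obtain ⟨-, hcount⟩ := aux_count hs y hb hsep'
          rw [Set.ncard_coe_finset, hcardeq] at hcount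
          exact_mod_cast hcount
        rw [hSy, hSz, ← Finset.sum_sub_distrib]
        calc |∑ t' ∈ F, (h (↑t') y - h (↑t') z)| ≤ ∑ t' ∈ F, |h (↑t') y - h (↑t') z| :=
            Finset.abs_sum_le_sum_abs _ _
          _ ≤ F.card • (4/s * d) := Finset.sum_le_card_nsmul F _ _ (fun t' _ => h_lip _ _ _)
          _ = (F.card : ℝ) * (4/s * d) := by rw [nsmul_eq_mul]
          _ ≤ (7:ℝ)^n * (4/s * d) := by
              apply mul_le_mul_of_nonneg_right hcard
              positivity
      -- decompose the difference
      have hMd : |M y - M z| ≤ |S y - S z| := by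
        rw [hM]
        simp only [max_comm (1:ℝ)]
        exact abs_max_sub_max_le_abs _ _ _
      have hdecomp : g t y - g t z = (h t y - h t z)/(M y) + h t z * (M z - M y)/(M y * M z) := by
        rw [hg]
        field_simp [hMne y, hMne z]
        ring
      have habs : |g t y - g t z| ≤ |h t y - h t z| + |M y - M z| := by
        rw [hdecomp]
        apply (abs_add_le _ _).trans
        have b1 : |(h t y - h t z)/(M y)| ≤ |h t y - h t z| := by
          rw [abs_div, abs_of_pos (hM_pos y)]
          exact div_le_self (abs_nonneg _) (hM_ge1 y)
        have b2 : |h t z * (M z - M y)/(M y * M z)| ≤ |M y - M z| := by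
          rw [abs_div, abs_mul, abs_of_pos (mul_pos (hM_pos y) (hM_pos z)),
            abs_of_nonneg (h_nonneg t z)]
          have hMM : 1 ≤ M y * M z := by nlinarith [hM_ge1 y, hM_ge1 z]
          calc h t z * |M z - M y| / (M y * M z) ≤ h t z * |M z - M y| / 1 := by
                apply div_le_div_of_nonneg_left ?_ ?_ hMM
                · positivity
                · norm_num
              _ = h t z * |M z - M y| := by ring
              _ ≤ 1 * |M z - M y| := mul_le_mul_of_nonneg_right (h_le_one t z) (abs_nonneg _)
              _ = |M y - M z| := by rw [one_mul, abs_sub_comm]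
        linarith
      have final : |g t y - g t z| ≤ 4/s * d + (7:ℝ)^n * (4/s * d) := by
        calc |g t y - g t z| ≤ |h t y - h t z| + |M y - M z| := habs
          _ ≤ 4/s * d + (7:ℝ)^n * (4/s * d) := by
              have := h_lip t y z
              have := hMd.trans hSd
              linarith
      apply final.trans
      have h7 : (7:ℝ)^n ≤ 130^n := pow_le_pow_left₀ (by norm_num) (by norm_num) n
      have e1 : 4/s * d + (7:ℝ)^n * (4/s * d) = (4 * d + 7^n * (4*d))/s := by ring
      have e2 : 40 * (130:ℝ)^n / s * d = (40 * 130^n * d)/s := by ring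
      rw [e1, e2]
      gcongr
      nlinarith [mul_nonneg (by linarith : (0:ℝ) ≤ (130:ℝ)^n - 7^n) hd0,
        mul_nonneg (by linarith : (0:ℝ) ≤ (130:ℝ)^n - 1) hd0]
    · -- far case
      push_neg at hnear
      have habs : |g t y - g t z| ≤ 1 := by
        have := g_nonneg t y
        have := g_le_one t y
        have := g_nonneg t z
        have := g_le_one t z
        rw [abs_le]
        constructor <;> linarith
      apply habs.trans
      have e2 : 40 * (130:ℝ)^n / s * d = (40 * 130^n * d)/s := by ring
      rw [e2, le_div_iff₀ hs]
      nlinarith [mul_nonneg (by linarith : (0:ℝ) ≤ (130:ℝ)^n - 1) hd0,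
        mul_nonneg (by linarith : (0:ℝ) ≤ (130:ℝ)^n) (by linarith : (0:ℝ) ≤ d - s/4)]
end

section
/- Suppose 1 ≤ q ≤ p ≤ ∞ with q < ∞, μ is a measure over a set X, G is a countable collection of μ-measurable functions from X to {t : 0 ≤ t ≤ ∞}, 1 ≤ κ < ∞, card ( { g ∈ G : g(x) > 0 } ) ≤ κ for μ-almost all x, and f(x) = Σ_{g ∈ G} g(x) for μ-almost all x. Then ‖f‖_{L^p(μ)} ≤ κ · ( Σ_{g ∈ G} ‖g‖_{L^p(μ)}^q )^{1/q}, and moreover ‖f‖_{L^∞(μ)} ≤ κ · sup ( {0} ∪ { ‖g‖_{L^∞(μ)} : g ∈ G } ). -/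
open MeasureTheory Set
open scoped ENNReal

/-- The `L^p(μ)` norm of a `[0, ∞]`-valued function: `(∫ h^p dμ)^(1/p)` for `p < ∞`, and the
essential supremum for `p = ∞`. -/
noncomputable def lpNormENNReal {X : Type*} [MeasurableSpace X] (μ : Measure X)
    (p : ℝ≥0∞) (f : X → ℝ≥0∞) : ℝ≥0∞ :=
  if p = ∞ then essSup f μ else (∫⁻ x, f x ^ p.toReal ∂μ) ^ (1 / p.toReal)

/-- Superadditivity of `rpow` with exponent `≥ 1` over a countable sum in `ℝ≥0∞`. -/
lemma aux_tsum_rpow_le {ι : Type*} (b : ι → ℝ≥0∞) {r : ℝ} (hr : 1 ≤ r) :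
    ∑' i, b i ^ r ≤ (∑' i, b i) ^ r := by
  have h1 : ∀ i, b i ^ r ≤ b i * (∑' i, b i) ^ (r - 1) := by
    intro i
    calc b i ^ r = b i ^ (1 + (r - 1)) := by ring_nf
      _ = b i ^ (1 : ℝ) * b i ^ (r - 1) :=
          ENNReal.rpow_add_of_nonneg _ _ zero_le_one (by linarith)
      _ ≤ b i * (∑' i, b i) ^ (r - 1) := by
          rw [ENNReal.rpow_one]
          exact mul_le_mul_right (ENNReal.rpow_le_rpow (ENNReal.le_tsum i) (by linarith)) _
  calc ∑' i, b i ^ r ≤ ∑' i, b i * (∑' i, b i) ^ (r - 1) := ENNReal.tsum_le_tsum h1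
    _ = (∑' i, b i) * (∑' i, b i) ^ (r - 1) := ENNReal.tsum_mul_right
    _ = (∑' i, b i) ^ r := by
        have h2 : (∑' i, b i) ^ r = (∑' i, b i) ^ (1 : ℝ) * (∑' i, b i) ^ (r - 1) := by
          rw [← ENNReal.rpow_add_of_nonneg _ _ zero_le_one (by linarith)]
          norm_num
        rw [h2, ENNReal.rpow_one]

/-- `ℓ^q ↪ ℓ^p` for `0 < q ≤ p`. -/
lemma aux_lq_le_lp {ι : Type*} (a : ι → ℝ≥0∞) {qR pR : ℝ} (hq : 0 < qR) (hqp : qR ≤ pR) :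
    (∑' i, a i ^ pR) ^ (1 / pR) ≤ (∑' i, a i ^ qR) ^ (1 / qR) := by
  have hp : 0 < pR := lt_of_lt_of_le hq hqp
  have hr : 1 ≤ pR / qR := (one_le_div hq).2 hqp
  have h1 : ∀ i, a i ^ pR = (a i ^ qR) ^ (pR / qR) := by
    intro i
    rw [← ENNReal.rpow_mul]
    congr 1
    field_simp
  calc (∑' i, a i ^ pR) ^ (1 / pR) = (∑' i, (a i ^ qR) ^ (pR / qR)) ^ (1 / pR) := by
        simp_rw [h1]
    _ ≤ ((∑' i, a i ^ qR) ^ (pR / qR)) ^ (1 / pR) :=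
        ENNReal.rpow_le_rpow (aux_tsum_rpow_le _ hr) (by positivity)
    _ = (∑' i, a i ^ qR) ^ (1 / qR) := by
        rw [← ENNReal.rpow_mul]
        congr 1
        field_simp

/-- A supremum is at most the `ℓ^r` norm. -/
lemma aux_sup_le {ι : Type*} (a : ι → ℝ≥0∞) {r : ℝ} (hr : 0 < r) :
    (⨆ i, a i) ≤ (∑' i, a i ^ r) ^ (1 / r) := by
  refine iSup_le fun i => ?_
  calc a i = (a i ^ r) ^ (1 / r) := by
        rw [← ENNReal.rpow_mul, mul_one_div, div_self hr.ne', ENNReal.rpow_one]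
    _ ≤ _ := ENNReal.rpow_le_rpow (ENNReal.le_tsum i) (by positivity)

/-- If almost everywhere at most `κ` of the countably many nonnegative functions in `G` are
positive, and `f` is their sum, then the `L^p` norm of `f` is bounded by `κ` times the
`ℓ^q`-combination of the `L^p` norms of the members of `G`; moreover the `L^∞` norm of `f`
is bounded by `κ` times the supremum of the `L^∞` norms. -/
theorem stmt_7 {X : Type*} [MeasurableSpace X] (μ : Measure X)
    (q p : ℝ≥0∞) (hq1 : 1 ≤ q) (hqp : q ≤ p) (hq : q ≠ ∞)
    (G : Set (X → ℝ≥0∞)) (hGc : G.Countable) (hGm : ∀ g ∈ G, Measurable g)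
    (κ : ℝ) (hκ : 1 ≤ κ)
    (hcard : ∀ᵐ x ∂μ, {g ∈ G | 0 < g x}.Finite ∧ ({g ∈ G | 0 < g x}.ncard : ℝ) ≤ κ)
    (f : X → ℝ≥0∞) (hf : ∀ᵐ x ∂μ, f x = ∑' g : G, (g : X → ℝ≥0∞) x) :
    lpNormENNReal μ p f ≤ ENNReal.ofReal κ *
        (∑' g : G, lpNormENNReal μ p (g : X → ℝ≥0∞) ^ q.toReal) ^ (1 / q.toReal) ∧
    lpNormENNReal μ ∞ f ≤ ENNReal.ofReal κ *
        ⨆ g : G, lpNormENNReal μ ∞ (g : X → ℝ≥0∞) := by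
  haveI : Countable ↥G := hGc.to_subtype
  have hqR : (1 : ℝ) ≤ q.toReal := by
    have := ENNReal.toReal_mono hq hq1
    simpa using this
  have hqR0 : 0 < q.toReal := lt_of_lt_of_le one_pos hqR
  -- Key pointwise a.e. bound
  have hae : ∀ᵐ x ∂μ, f x ≤ ENNReal.ofReal κ * ⨆ g : G, (g : X → ℝ≥0∞) x := by
    filter_upwards [hcard, hf] with x hc hfx
    obtain ⟨hfin, hle⟩ := hc
    rw [hfx]
    set T : Set (X → ℝ≥0∞) := {g ∈ G | 0 < g x} with hT
    have hTG : T ⊆ G := fun g hg => hg.1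
    have key : (∑' g : G, (g : X → ℝ≥0∞) x) = ∑' g : T, (g : X → ℝ≥0∞) x := by
      rw [tsum_subtype G fun g => g x, tsum_subtype T fun g => g x]
      congr 1
      funext g
      by_cases hg : g ∈ T
      · rw [Set.indicator_of_mem (hTG hg), Set.indicator_of_mem hg]
      · rw [Set.indicator_of_notMem hg]
        by_cases hg' : g ∈ G
        · rw [Set.indicator_of_mem hg']
          have : ¬ 0 < g x := fun h => hg ⟨hg', h⟩
          simpa using not_lt.1 this
        · rw [Set.indicator_of_notMem hg']
    rw [key]
    haveI : Fintype T := hfin.fintype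
    rw [tsum_eq_sum (s := (Finset.univ : Finset T)) (fun g hg => absurd (Finset.mem_univ g) hg)]
    have hbd : ∀ g ∈ (Finset.univ : Finset T), (g : X → ℝ≥0∞) x ≤ ⨆ g : G, (g : X → ℝ≥0∞) x :=
      fun g _ => le_iSup (fun g : G => (g : X → ℝ≥0∞) x) ⟨(g : X → ℝ≥0∞), hTG g.2⟩
    calc ∑ g : T, (g : X → ℝ≥0∞) x
        ≤ (Finset.univ : Finset T).card • ⨆ g : G, (g : X → ℝ≥0∞) x :=
          Finset.sum_le_card_nsmul _ _ _ hbd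
      _ = ((T.ncard : ℝ≥0∞)) * ⨆ g : G, (g : X → ℝ≥0∞) x := by
          rw [nsmul_eq_mul, Set.ncard_eq_toFinset_card']
          simp [Set.toFinset_card]
      _ ≤ ENNReal.ofReal κ * ⨆ g : G, (g : X → ℝ≥0∞) x := by
          gcongr
          calc ((T.ncard : ℝ≥0∞)) = ENNReal.ofReal (T.ncard : ℝ) := by
                rw [ENNReal.ofReal_natCast]
            _ ≤ ENNReal.ofReal κ := ENNReal.ofReal_le_ofReal hle
  -- Second conjunct
  have h2 : lpNormENNReal μ ∞ f ≤ ENNReal.ofReal κ *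
      ⨆ g : G, lpNormENNReal μ ∞ (g : X → ℝ≥0∞) := by
    simp only [lpNormENNReal, if_pos rfl]
    have hbdd : ∀ᵐ x ∂μ, ∀ g : G, (g : X → ℝ≥0∞) x ≤ essSup (g : X → ℝ≥0∞) μ :=
      (ae_all_iff).2 fun g => ae_le_essSup
    refine essSup_le_of_ae_le _ ?_
    filter_upwards [hae, hbdd] with x h1 hb
    exact h1.trans (mul_le_mul_right (iSup_mono fun g => hb g) _)
  refine ⟨?_, h2⟩
  by_cases hp : p = ∞
  · subst hp
    refine h2.trans ?_
    gcongr
    exact aux_sup_le _ hqR0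
  · have hpR : (1 : ℝ) ≤ p.toReal := by
      have := ENNReal.toReal_mono hp (hq1.trans hqp)
      simpa using this
    have hpR0 : 0 < p.toReal := lt_of_lt_of_le one_pos hpR
    have hqpR : q.toReal ≤ p.toReal := (ENNReal.toReal_le_toReal hq hp).2 hqp
    simp only [lpNormENNReal, if_neg hp]
    have hmeas : ∀ g : G, AEMeasurable (fun x => (g : X → ℝ≥0∞) x ^ p.toReal) μ :=
      fun g => ((hGm g g.2).pow_const p.toReal).aemeasurable
    have step1 : (∫⁻ x, f x ^ p.toReal ∂μ) ≤
        ENNReal.ofReal κ ^ p.toReal * ∑' g : G, ∫⁻ x, (g : X → ℝ≥0∞) x ^ p.toReal ∂μ := by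
      rw [← lintegral_tsum hmeas, ← lintegral_const_mul'' _
        ((AEMeasurable.ennreal_tsum hmeas))]
      refine lintegral_mono_ae ?_
      filter_upwards [hae] with x hx
      calc f x ^ p.toReal
          ≤ (ENNReal.ofReal κ * ((∑' g : G, (g : X → ℝ≥0∞) x ^ p.toReal) ^ (1 / p.toReal)))
              ^ p.toReal := by
            gcongr
            exact hx.trans (mul_le_mul_right (aux_sup_le _ hpR0) _)
        _ = ENNReal.ofReal κ ^ p.toReal * ∑' g : G, (g : X → ℝ≥0∞) x ^ p.toReal := by
            rw [ENNReal.mul_rpow_of_nonneg _ _ hpR0.le, ← ENNReal.rpow_mul,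
              one_div_mul_cancel hpR0.ne', ENNReal.rpow_one]
    calc (∫⁻ x, f x ^ p.toReal ∂μ) ^ (1 / p.toReal)
        ≤ (ENNReal.ofReal κ ^ p.toReal *
            ∑' g : G, ∫⁻ x, (g : X → ℝ≥0∞) x ^ p.toReal ∂μ) ^ (1 / p.toReal) :=
          ENNReal.rpow_le_rpow step1 (by positivity)
      _ = ENNReal.ofReal κ *
            (∑' g : G, ((∫⁻ x, (g : X → ℝ≥0∞) x ^ p.toReal ∂μ) ^ (1 / p.toReal)) ^ p.toReal)
              ^ (1 / p.toReal) := by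
          rw [ENNReal.mul_rpow_of_nonneg _ _ (by positivity), ← ENNReal.rpow_mul,
            mul_one_div, div_self hpR0.ne', ENNReal.rpow_one]
          congr 1
          refine congrArg (· ^ (1 / p.toReal)) ?_
          refine tsum_congr fun g => ?_
          rw [← ENNReal.rpow_mul, one_div_mul_cancel hpR0.ne', ENNReal.rpow_one]
      _ ≤ ENNReal.ofReal κ *
            (∑' g : G, ((∫⁻ x, (g : X → ℝ≥0∞) x ^ p.toReal ∂μ) ^ (1 / p.toReal)) ^ q.toReal)
              ^ (1 / q.toReal) := by
          exact mul_le_mul_right (aux_lq_le_lp _ hqR0 hqpR) _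
end

section
/- If f is a nonnegative Lebesgue measurable extended-real valued function on ℝ, O ⊆ ℝ is a set of Lebesgue measure zero, ε > 0, and j is a positive integer, then there exist real numbers b_1, …, b_j such that ε(i−1) < b_i < εi and b_i ∉ O for i = 1, …, j, and Σ_{i=1}^{j} (b_i − b_{i−1}) · f(b_i) ≤ 2 ∫ f dL¹, where b_0 = 0. -/
open MeasureTheory Set
open scoped ENNReal

lemma key_choice (f : ℝ → ℝ≥0∞) (hf : Measurable f) (O : Set ℝ)
    (hO : volume O = 0) (a c : ℝ) (h : a < c) :
    ∃ x, x ∈ Ioo a c ∧ x ∉ O ∧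
      ENNReal.ofReal (c - a) * f x ≤ ∫⁻ y in Ioo a c, f y := by
  have hvol : volume (Ioo a c) = ENNReal.ofReal (c - a) := Real.volume_Ioo
  have h0 : volume (Ioo a c) ≠ 0 := by
    rw [hvol]; simp [ENNReal.ofReal_eq_zero]; linarith
  have htop : volume (Ioo a c) ≠ ∞ := by rw [hvol]; exact ENNReal.ofReal_ne_top
  have pos := measure_le_setLAverage_pos (μ := volume) (s := Ioo a c) (f := f)
    h0 htop hf.aemeasurable.restrict
  rw [← measure_diff_null hO] at pos
  obtain ⟨x, hx, hxO⟩ := nonempty_of_measure_ne_zero pos.ne'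
  obtain ⟨hxI, hxle⟩ := hx
  refine ⟨x, hxI, hxO, ?_⟩
  rw [setLAverage_eq, hvol] at hxle
  calc ENNReal.ofReal (c - a) * f x
      ≤ ENNReal.ofReal (c - a) * ((∫⁻ y in Ioo a c, f y) / ENNReal.ofReal (c - a)) :=
        mul_le_mul_right hxle _
    _ ≤ ∫⁻ y in Ioo a c, f y := by
        exact ENNReal.mul_div_le

/-- Choice of step points: for a nonnegative measurable `f : ℝ → [0, ∞]`, a null set `O`,
`ε > 0`, and `j ≥ 1`, there are points `b_i ∈ (ε(i-1), εi) ∖ O` such that the Riemann-type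
lower sum `Σ (b_i - b_{i-1}) f(b_i)` is at most `2 ∫ f dℒ¹`. -/
theorem stmt_8 (f : ℝ → ℝ≥0∞) (hf : Measurable f) (O : Set ℝ)
    (hO : volume O = 0) (ε : ℝ) (hε : 0 < ε) (j : ℕ) (hj : 0 < j) :
    ∃ b : ℕ → ℝ, b 0 = 0 ∧
      (∀ i, 1 ≤ i → i ≤ j → ε * ((i : ℝ) - 1) < b i ∧ b i < ε * i ∧ b i ∉ O) ∧
      ∑ i ∈ Finset.Icc 1 j, ENNReal.ofReal (b i - b (i - 1)) * f (b i)
        ≤ 2 * ∫⁻ x, f x := by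
  -- interval for index i ≥ 1
  set I : ℕ → Set ℝ := fun i => Ioo (ε * ((i : ℝ) - 1)) (ε * i) with hI
  have hlt : ∀ i : ℕ, 1 ≤ i → ε * ((i : ℝ) - 1) < ε * i := by
    intro i hi
    have : (i : ℝ) - 1 < i := by linarith
    exact mul_lt_mul_of_pos_left this hε
  have hch : ∀ i : ℕ, 1 ≤ i → ∃ x, x ∈ I i ∧ x ∉ O ∧
      ENNReal.ofReal (ε * i - ε * ((i : ℝ) - 1)) * f x ≤ ∫⁻ y in I i, f y := by
    intro i hi
    exact key_choice f hf O hO _ _ (hlt i hi)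
  classical
  choose! c hc1 hc2 hc3 using hch
  refine ⟨fun i => if i = 0 then 0 else c i, by simp, ?_, ?_⟩
  · intro i h1 h2
    simp only [Nat.pos_iff_ne_zero.mp h1, if_neg (Nat.pos_iff_ne_zero.mp (by omega : 0 < i))]
    exact ⟨(hc1 i h1).1, (hc1 i h1).2, hc2 i h1⟩
  · -- the sum bound
    have hterm : ∀ i ∈ Finset.Icc 1 j,
        ENNReal.ofReal ((if i = 0 then (0:ℝ) else c i) - (if i - 1 = 0 then (0:ℝ) else c (i-1)))
          * f (if i = 0 then 0 else c i) ≤ 2 * ∫⁻ y in I i, f y := by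
      intro i hi
      rw [Finset.mem_Icc] at hi
      obtain ⟨h1, h2⟩ := hi
      have hi0 : i ≠ 0 := by omega
      simp only [if_neg hi0]
      have hlen : (if i - 1 = 0 then (0:ℝ) else c (i-1)) ≥ ε * ((i:ℝ) - 2) := by
        by_cases hone : i - 1 = 0
        · have : i = 1 := by omega
          subst this
          simp; nlinarith
        · rw [if_neg hone]
          have := (hc1 (i-1) (by omega)).1
          have hcast : ((i - 1 : ℕ) : ℝ) = (i : ℝ) - 1 := by
            have : 1 ≤ i := h1
            push_cast [this]; ring
          rw [hcast] at this
          linarith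
      have hub : (c i) - (if i - 1 = 0 then (0:ℝ) else c (i-1)) ≤ 2 * (ε * i - ε * ((i:ℝ)-1)) := by
        have h2' := (hc1 i h1).2
        have : ε * (i:ℝ) - ε * ((i:ℝ) - 2) = 2 * (ε * i - ε * ((i:ℝ) - 1)) := by ring
        linarith
      calc ENNReal.ofReal ((c i) - (if i - 1 = 0 then (0:ℝ) else c (i-1))) * f (c i)
          ≤ ENNReal.ofReal (2 * (ε * i - ε * ((i:ℝ)-1))) * f (c i) :=
            mul_le_mul_left (ENNReal.ofReal_le_ofReal hub) _
        _ = 2 * (ENNReal.ofReal (ε * i - ε * ((i:ℝ)-1)) * f (c i)) := by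
            rw [ENNReal.ofReal_mul (by norm_num : (0:ℝ) ≤ 2)]
            simp [mul_assoc, ENNReal.ofReal_ofNat]
        _ ≤ 2 * ∫⁻ y in I i, f y := mul_le_mul_right (hc3 i h1) _
    calc ∑ i ∈ Finset.Icc 1 j, ENNReal.ofReal ((if i = 0 then (0:ℝ) else c i) - (if i - 1 = 0 then (0:ℝ) else c (i-1))) * f (if i = 0 then 0 else c i)
        ≤ ∑ i ∈ Finset.Icc 1 j, 2 * ∫⁻ y in I i, f y := Finset.sum_le_sum hterm
      _ = 2 * ∑ i ∈ Finset.Icc 1 j, ∫⁻ y in I i, f y := by rw [Finset.mul_sum]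
      _ ≤ 2 * ∫⁻ x, f x := by
          gcongr
          have hdisj : Set.PairwiseDisjoint (↑(Finset.Icc 1 j)) I := by
            intro a ha b hb hab
            simp only [hI]
            apply Set.Ioo_disjoint_Ioo.mpr
            rcases hab.lt_or_gt with h | h
            · refine le_trans (min_le_left _ _) (le_trans ?_ (le_max_right _ _))
              have : (a : ℝ) + 1 ≤ (b : ℝ) := by exact_mod_cast Nat.add_one_le_iff.mpr h
              nlinarith
            · refine le_trans (min_le_right _ _) (le_trans ?_ (le_max_left _ _))
              have : (b : ℝ) + 1 ≤ (a : ℝ) := by exact_mod_cast Nat.add_one_le_iff.mpr h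
              nlinarith
          rw [← lintegral_biUnion_finset hdisj (fun i _ => measurableSet_Ioo) f]
          exact setLIntegral_le_lintegral _ f
end
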